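/- arXiv:2304.10620 — 2 statements merged into one kernel-verified Lean document; each statement's English description precedes it below -/
import Mathlib

section
/- Let V be a type and let w : V → V → ℕ be the edge-multiplicity function of a directed multigraph such that every vertex has finite out-degree (for each u the set {v : w(u,v) ≠ 0} is finite). Suppose there is a finite subset S ⊆ V such that: (i) every vertex not in S has out-degree at most 1 and in-degree at most 1; (ii) every based closed directed walk of positive length passes through a vertex of S; and (iii) there exists at least one based closed directed walk of positive length. Then for every n ≥ 1 the number c(n) of based closed directed walks of length n is finite, for every vertex i the number p(i,n) of directed walks of length n starting at i is finite, and limsup_{n→∞} c(n)^{1/n} = sup_{i ∈ V} limsup_{n→∞} p(i,n)^{1/n}; moreover this supremum is attained at some vertex of S. -/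
open scoped Classical

/-- `walkCount w n i k` is the number of directed walks of length `n` from `i` to `k` in the
directed multigraph with edge-multiplicity function `w`, counted with multiplicity: the walks
along a fixed vertex sequence `i = v₀, v₁, …, vₙ = k` are counted `∏_{t<n} w(v_t, v_{t+1})`
times. -/
noncomputable def walkCount {V : Type*} (w : V → V → ℕ) : ℕ → V → V → ℕ
  | 0, i, k => if i = k then 1 else 0
  | n + 1, i, k => ∑ᶠ v, w i v * walkCount w n v k

/-- `walkCountIn w C n i k` is the number of directed walks of length `n` from `i` to `k`,
counted with multiplicity, all of whose vertices lie in the set `C`. -/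
noncomputable def walkCountIn {V : Type*} (w : V → V → ℕ) (C : Set V) : ℕ → V → V → ℕ
  | 0, i, k => if i = k ∧ i ∈ C then 1 else 0
  | n + 1, i, k => if i ∈ C then ∑ᶠ v, w i v * walkCountIn w C n v k else 0

open scoped ENNReal

open scoped NNReal

set_option linter.unusedSectionVars false
set_option maxHeartbeats 1000000

namespace CG

variable {V : Type*} (w : V → V → ℕ) (S C : Set V)

lemma wc_zero (i k : V) : walkCount w 0 i k = if i = k then 1 else 0 := rfl
lemma wc_succ (n : ℕ) (i k : V) :
    walkCount w (n+1) i k = ∑ᶠ v, w i v * walkCount w n v k := rfl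
lemma wi_zero (i k : V) : walkCountIn w C 0 i k = if i = k ∧ i ∈ C then 1 else 0 := rfl
lemma wi_succ (n : ℕ) (i k : V) :
    walkCountIn w C (n+1) i k = if i ∈ C then ∑ᶠ v, w i v * walkCountIn w C n v k else 0 := rfl

variable {w S C}

section basic
variable (hfin : ∀ u : V, {v | w u v ≠ 0}.Finite)
include hfin
set_option linter.unusedSectionVars false

lemma wc_succ_sum {i : V} (F : Finset V) (hF : {v | w i v ≠ 0} ⊆ ↑F) (n : ℕ) (k : V) :
    walkCount w (n+1) i k = ∑ v ∈ F, w i v * walkCount w n v k := by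
  rw [wc_succ]
  refine finsum_eq_finset_sum_of_support_subset _ ?_
  intro v hv
  apply hF
  simp only [Function.mem_support, ne_eq, Set.mem_setOf_eq] at hv ⊢
  exact fun h => hv (by simp [h])

lemma wi_succ_sum {i : V} (hi : i ∈ C) (F : Finset V) (hF : {v | w i v ≠ 0} ⊆ ↑F) (n : ℕ) (k : V) :
    walkCountIn w C (n+1) i k = ∑ v ∈ F, w i v * walkCountIn w C n v k := by
  rw [wi_succ, if_pos hi]
  refine finsum_eq_finset_sum_of_support_subset _ ?_
  intro v hv
  apply hF
  simp only [Function.mem_support, ne_eq, Set.mem_setOf_eq] at hv ⊢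
  exact fun h => hv (by simp [h])

lemma suppWC : ∀ (n : ℕ) (i : V), {k | walkCount w n i k ≠ 0}.Finite
  | 0, i => Set.Finite.subset (Set.finite_singleton i) (by
      intro k hk
      simp only [Set.mem_setOf_eq, wc_zero] at hk
      by_cases h : i = k
      · exact Set.mem_singleton_iff.mpr h.symm
      · simp [h] at hk)
  | n + 1, i => by
      refine Set.Finite.subset ((hfin i).biUnion (fun v _ => suppWC n v)) ?_
      intro k hk
      simp only [Set.mem_setOf_eq, wc_succ] at hk
      have : ∃ v, w i v * walkCount w n v k ≠ 0 := by
        by_contra h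
        push_neg at h
        exact hk (by rw [finsum_congr h, finsum_zero])
      obtain ⟨v, hv⟩ := this
      simp only [Set.mem_iUnion, Set.mem_setOf_eq]
      exact ⟨v, fun h0 => hv (by simp [h0]), fun h0 => hv (by simp [h0])⟩

lemma wi_le_wc : ∀ (n : ℕ) (i k : V), walkCountIn w C n i k ≤ walkCount w n i k
  | 0, i, k => by
      rw [wi_zero, wc_zero]
      split_ifs with h1 h2 h2 <;> simp_all
  | n + 1, i, k => by
      rw [wc_succ_sum hfin (hfin i).toFinset (by simp) n k, wi_succ]
      split_ifs with h
      · rw [finsum_eq_finset_sum_of_support_subset _ (s := (hfin i).toFinset) (by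
          intro v hv
          simp only [Function.mem_support, ne_eq] at hv
          simp only [Set.Finite.coe_toFinset, Set.mem_setOf_eq]
          exact fun h0 => hv (by simp [h0]))]
        exact Finset.sum_le_sum fun v _ => Nat.mul_le_mul_left _ (wi_le_wc n v k)
      · exact Nat.zero_le _

lemma suppWI (n : ℕ) (i : V) : {k | walkCountIn w C n i k ≠ 0}.Finite := by
  refine Set.Finite.subset (suppWC hfin n i) ?_
  intro k hk
  simp only [Set.mem_setOf_eq] at hk ⊢
  exact fun h => hk (Nat.le_zero.mp (h ▸ wi_le_wc hfin n i k))

end basic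

lemma wi_univ : ∀ (n : ℕ) (i k : V), walkCountIn w Set.univ n i k = walkCount w n i k
  | 0, i, k => by simp [wi_zero, wc_zero]
  | n + 1, i, k => by
      rw [wi_succ, wc_succ, if_pos (Set.mem_univ i)]
      exact finsum_congr fun v => by rw [wi_univ n v k]

lemma wi_start_notin : ∀ (n : ℕ) {i : V}, i ∉ C → ∀ (k : V), walkCountIn w C n i k = 0
  | 0, i, hi, k => by simp [wi_zero]; tauto
  | n + 1, i, hi, k => by rw [wi_succ, if_neg hi]

lemma wi_end_notin : ∀ (n : ℕ) (i : V) {k : V}, k ∉ C → walkCountIn w C n i k = 0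
  | 0, i, k, hk => by simp [wi_zero]; intro h; exact fun hc => absurd (h ▸ hc) hk
  | n + 1, i, k, hk => by
      rw [wi_succ]
      split_ifs with h
      · rw [finsum_congr fun v => by rw [wi_end_notin n v hk, mul_zero], finsum_zero]
      · rfl

lemma wi_mono {C' : Set V} (hCC : C ⊆ C') (hfin : ∀ u : V, {v | w u v ≠ 0}.Finite) :
    ∀ (n : ℕ) (i k : V), walkCountIn w C n i k ≤ walkCountIn w C' n i k
  | 0, i, k => by
      rw [wi_zero, wi_zero]
      split_ifs with h1 h2 h2
      · exact le_refl _
      · exact absurd ⟨h1.1, hCC h1.2⟩ h2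
      · exact Nat.zero_le _
      · exact le_refl _
  | n + 1, i, k => by
      rw [wi_succ, wi_succ]
      split_ifs with h1 h2 h2
      · rw [finsum_eq_finset_sum_of_support_subset _ (s := (hfin i).toFinset) (by
            intro v hv; simp only [Function.mem_support, ne_eq] at hv
            simp only [Set.Finite.coe_toFinset, Set.mem_setOf_eq]
            exact fun h0 => hv (by simp [h0])),
          finsum_eq_finset_sum_of_support_subset _ (s := (hfin i).toFinset) (by
            intro v hv; simp only [Function.mem_support, ne_eq] at hv
            simp only [Set.Finite.coe_toFinset, Set.mem_setOf_eq]
            exact fun h0 => hv (by simp [h0]))]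
        exact Finset.sum_le_sum fun v _ => Nat.mul_le_mul_left _ (wi_mono hCC hfin n v k)
      · exact absurd (hCC h1) h2
      · exact Nat.zero_le _
      · exact le_refl _



lemma finsum_ne_zero_exists {α : Type*} {f : α → ℕ} (h : ∑ᶠ v, f v ≠ 0) : ∃ v, f v ≠ 0 := by
  by_contra hc
  push_neg at hc
  exact h (by rw [finsum_congr hc, finsum_zero])

lemma finsetSum_le_finsum {f : V → ℕ} (hf : (Function.support f).Finite) (F : Finset V) :
    ∑ k ∈ F, f k ≤ ∑ᶠ k, f k := by
  rw [finsum_eq_finset_sum_of_support_subset f (s := F ∪ hf.toFinset) (by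
    intro v hv
    simp only [Finset.coe_union, Set.mem_union, Finset.mem_coe, Set.Finite.coe_toFinset]
    exact Or.inr hv)]
  exact Finset.sum_le_sum_of_subset Finset.subset_union_left

lemma le_finsum' {f : V → ℕ} (hf : (Function.support f).Finite) (i : V) : f i ≤ ∑ᶠ k, f k :=
  single_le_finsum i hf (fun _ => Nat.zero_le _)

lemma sum_le_one_of_det (F : Finset V) (f : V → ℕ) (v₀ : V)
    (h0 : ∀ v, v ≠ v₀ → f v = 0) (h1 : f v₀ ≤ 1) : ∑ v ∈ F, f v ≤ 1 := by
  by_cases hv : v₀ ∈ F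
  · rw [Finset.sum_eq_single_of_mem v₀ hv (fun b _ hb => h0 b hb)]; exact h1
  · rw [Finset.sum_eq_zero (fun b hb => h0 b (fun hbv => hv (hbv ▸ hb)))]
    exact Nat.zero_le _

lemma wc_succ_ne (hfin : ∀ u : V, {v | w u v ≠ 0}.Finite) {n : ℕ} {i k : V}
    (h : walkCount w (n+1) i k ≠ 0) : ∃ v, w i v ≠ 0 ∧ walkCount w n v k ≠ 0 := by
  rw [wc_succ] at h
  obtain ⟨v, hv⟩ := finsum_ne_zero_exists h
  exact ⟨v, fun h0 => hv (by simp [h0]), fun h0 => hv (by simp [h0])⟩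

lemma wi_succ_ne {n : ℕ} {i k : V}
    (h : walkCountIn w C (n+1) i k ≠ 0) : ∃ v, w i v ≠ 0 ∧ walkCountIn w C n v k ≠ 0 := by
  rw [wi_succ] at h
  split_ifs at h with hc
  · obtain ⟨v, hv⟩ := finsum_ne_zero_exists h
    exact ⟨v, fun h0 => hv (by simp [h0]), fun h0 => hv (by simp [h0])⟩
  · exact absurd rfl h

/-- total number of walks of length `n` from `i`. -/
noncomputable def pt (w : V → V → ℕ) (n : ℕ) (i : V) : ℕ := ∑ᶠ k, walkCount w n i k
/-- total number of walks of length `n` from `i` inside `C`. -/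
noncomputable def qt (w : V → V → ℕ) (C : Set V) (n : ℕ) (i : V) : ℕ := ∑ᶠ k, walkCountIn w C n i k

lemma pt_zero (i : V) : pt w 0 i = 1 := by
  rw [pt, finsum_eq_single _ i (fun x hx => by rw [wc_zero, if_neg (fun h => hx h.symm)])]
  rw [wc_zero, if_pos rfl]

lemma pt_succ (hfin : ∀ u : V, {v | w u v ≠ 0}.Finite) (n : ℕ) (i : V) :
    pt w (n+1) i = ∑ v ∈ (hfin i).toFinset, w i v * pt w n v := by
  classical
  set F : Finset V := (hfin i).toFinset.biUnion (fun v => (suppWC hfin n v).toFinset) with hF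
  have hsupp : Function.support (fun k => walkCount w (n+1) i k) ⊆ ↑F := by
    intro k hk
    obtain ⟨v, hv1, hv2⟩ := wc_succ_ne hfin hk
    simp only [hF, Finset.coe_biUnion, Set.mem_iUnion, Finset.mem_coe, Set.Finite.mem_toFinset]
    exact ⟨v, by simpa using hv1, by simpa using hv2⟩
  rw [pt, finsum_eq_finset_sum_of_support_subset _ hsupp]
  have : ∀ k ∈ F, walkCount w (n+1) i k = ∑ v ∈ (hfin i).toFinset, w i v * walkCount w n v k :=
    fun k _ => wc_succ_sum hfin _ (by simp) n k
  rw [Finset.sum_congr rfl this, Finset.sum_comm]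
  refine Finset.sum_congr rfl (fun v hv => ?_)
  rw [← Finset.mul_sum, pt, finsum_eq_finset_sum_of_support_subset _ (s := F) (by
    intro k hk
    simp only [hF, Finset.coe_biUnion, Set.mem_iUnion, Finset.mem_coe, Set.Finite.mem_toFinset]
    exact ⟨v, by simpa using hv, hk⟩)]

lemma qt_succ (hfin : ∀ u : V, {v | w u v ≠ 0}.Finite) (n : ℕ) {i : V} (hi : i ∈ C) :
    qt w C (n+1) i = ∑ v ∈ (hfin i).toFinset, w i v * qt w C n v := by
  classical
  set F : Finset V := (hfin i).toFinset.biUnion (fun v => (suppWI hfin n v).toFinset) with hF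
  have hsupp : Function.support (fun k => walkCountIn w C (n+1) i k) ⊆ ↑F := by
    intro k hk
    obtain ⟨v, hv1, hv2⟩ := wi_succ_ne hk
    simp only [hF, Finset.coe_biUnion, Set.mem_iUnion, Finset.mem_coe, Set.Finite.mem_toFinset]
    exact ⟨v, by simpa using hv1, by simpa using hv2⟩
  rw [qt, finsum_eq_finset_sum_of_support_subset _ hsupp]
  have : ∀ k ∈ F, walkCountIn w C (n+1) i k = ∑ v ∈ (hfin i).toFinset, w i v * walkCountIn w C n v k :=
    fun k _ => wi_succ_sum hfin hi _ (by simp) n k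
  rw [Finset.sum_congr rfl this, Finset.sum_comm]
  refine Finset.sum_congr rfl (fun v hv => ?_)
  rw [← Finset.mul_sum, qt, finsum_eq_finset_sum_of_support_subset _ (s := F) (by
    intro k hk
    simp only [hF, Finset.coe_biUnion, Set.mem_iUnion, Finset.mem_coe, Set.Finite.mem_toFinset]
    exact ⟨v, by simpa using hv, hk⟩)]

lemma qt_zero (i : V) : qt w C 0 i = if i ∈ C then 1 else 0 := by
  rw [qt, finsum_eq_single _ i (fun x hx => by
    rw [wi_zero, if_neg (fun h => hx h.1.symm)])]
  rw [wi_zero]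
  by_cases h : i ∈ C <;> simp [h]

/-- determinism outside `S`: total walk count inside `Sᶜ` is at most 1. -/
lemma qtSc_le_one (hfin : ∀ u : V, {v | w u v ≠ 0}.Finite)
    (hout : ∀ u ∉ S, ∃ v₀, w u v₀ ≤ 1 ∧ ∀ v, v ≠ v₀ → w u v = 0) :
    ∀ (n : ℕ) (u : V), qt w Sᶜ n u ≤ 1
  | 0, u => by rw [qt_zero]; split_ifs <;> simp
  | n + 1, u => by
      by_cases hu : u ∈ Sᶜ
      · rw [qt_succ hfin n hu]
        obtain ⟨v₀, hv₀, hz⟩ := hout u hu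
        refine sum_le_one_of_det _ _ v₀ (fun v hv => by rw [hz v hv, zero_mul]) ?_
        calc w u v₀ * qt w Sᶜ n v₀ ≤ 1 * 1 :=
              Nat.mul_le_mul hv₀ (qtSc_le_one hfin hout n v₀)
          _ = 1 := by ring
      · rw [qt, finsum_congr (fun k => wi_start_notin (n+1) hu k), finsum_zero]
        exact Nat.zero_le _


lemma sum_swap_mul {α β γ : Type*} (R : Finset α) (T : Finset β) (F : Finset γ)
    (a : γ → ℕ) (b : α → γ → β → ℕ) (c : α → β → ℕ) :
    ∑ t ∈ R, ∑ x ∈ T, (∑ u ∈ F, a u * b t u x) * c t x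
      = ∑ u ∈ F, a u * ∑ t ∈ R, ∑ x ∈ T, b t u x * c t x := by
  calc ∑ t ∈ R, ∑ x ∈ T, (∑ u ∈ F, a u * b t u x) * c t x
      = ∑ t ∈ R, ∑ x ∈ T, ∑ u ∈ F, a u * (b t u x * c t x) := by
        refine Finset.sum_congr rfl fun t _ => Finset.sum_congr rfl fun x _ => ?_
        rw [Finset.sum_mul]
        exact Finset.sum_congr rfl fun u _ => mul_assoc _ _ _
    _ = ∑ t ∈ R, ∑ u ∈ F, ∑ x ∈ T, a u * (b t u x * c t x) :=
        Finset.sum_congr rfl fun t _ => Finset.sum_comm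
    _ = ∑ u ∈ F, ∑ t ∈ R, ∑ x ∈ T, a u * (b t u x * c t x) := Finset.sum_comm
    _ = ∑ u ∈ F, a u * ∑ t ∈ R, ∑ x ∈ T, b t u x * c t x := by
        refine Finset.sum_congr rfl fun u _ => ?_
        rw [Finset.mul_sum]
        exact Finset.sum_congr rfl fun t _ => (Finset.mul_sum _ _ _).symm

/-- number of walks of length `t` from `v` whose first `t` vertices lie outside `S`
and which end at `x ∈ S` (the first `S`-visit). -/
noncomputable def pre (w : V → V → ℕ) (S : Set V) : ℕ → V → V → ℕ
  | 0, v, x => if v = x ∧ v ∈ S then 1 else 0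
  | t + 1, v, x => if v ∈ S then 0 else ∑ᶠ u, w v u * pre w S t u x

lemma pre_zero (v x : V) : pre w S 0 v x = if v = x ∧ v ∈ S then 1 else 0 := rfl
lemma pre_succ (t : ℕ) (v x : V) :
    pre w S (t+1) v x = if v ∈ S then 0 else ∑ᶠ u, w v u * pre w S t u x := rfl

lemma pre_succ_sum (hfin : ∀ u : V, {v | w u v ≠ 0}.Finite) (t : ℕ) {v : V} (hv : v ∉ S) (x : V) :
    pre w S (t+1) v x = ∑ u ∈ (hfin v).toFinset, w v u * pre w S t u x := by
  rw [pre_succ, if_neg hv]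
  refine finsum_eq_finset_sum_of_support_subset _ ?_
  intro u hu
  simp only [Function.mem_support, ne_eq] at hu
  simp only [Set.Finite.coe_toFinset, Set.mem_setOf_eq]
  exact fun h0 => hu (by simp [h0])

lemma pre_le_one (hout : ∀ u ∉ S, ∃ v₀, w u v₀ ≤ 1 ∧ ∀ v, v ≠ v₀ → w u v = 0) :
    ∀ (t : ℕ) (v x : V), pre w S t v x ≤ 1
  | 0, v, x => by rw [pre_zero]; split_ifs <;> simp
  | t + 1, v, x => by
      rw [pre_succ]
      split_ifs with hv
      · exact Nat.zero_le _
      · obtain ⟨v₀, hv₀, hz⟩ := hout v hv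
        rw [finsum_eq_single _ v₀ (fun u hu => by rw [hz u hu, zero_mul])]
        calc w v v₀ * pre w S t v₀ x ≤ 1 * 1 := Nat.mul_le_mul hv₀ (pre_le_one hout t v₀ x)
          _ = 1 := by ring

lemma pre_notS : ∀ (t : ℕ) (v : V) {x : V}, x ∉ S → pre w S t v x = 0
  | 0, v, x, hx => by
      rw [pre_zero, if_neg]
      rintro ⟨h1, h2⟩
      exact hx (h1 ▸ h2)
  | t + 1, v, x, hx => by
      rw [pre_succ]
      split_ifs with hv
      · rfl
      · rw [finsum_congr (fun u => by rw [pre_notS t u hx, mul_zero]), finsum_zero]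

lemma pre_le_wc (hfin : ∀ u : V, {v | w u v ≠ 0}.Finite) :
    ∀ (t : ℕ) (v x : V), pre w S t v x ≤ walkCount w t v x
  | 0, v, x => by
      rw [pre_zero, wc_zero]
      split_ifs with h1 h2 h2
      · exact le_refl _
      · exact absurd h1.1 h2
      · exact Nat.zero_le _
      · exact le_refl _
  | t + 1, v, x => by
      by_cases hv : v ∈ S
      · rw [pre_succ, if_pos hv]; exact Nat.zero_le _
      · rw [pre_succ_sum hfin t hv x, wc_succ_sum hfin (hfin v).toFinset (by simp) t x]
        exact Finset.sum_le_sum fun u _ => Nat.mul_le_mul_left _ (pre_le_wc hfin t u x)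

/-- First-`S`-visit decomposition inside `↑T ∪ Sᶜ` for `↑T ⊆ S`. -/
lemma firstVisit (hfin : ∀ u : V, {v | w u v ≠ 0}.Finite) (T : Finset V) (hT : ↑T ⊆ S) :
    ∀ (n : ℕ) (v k : V), walkCountIn w (↑T ∪ Sᶜ) n v k =
      walkCountIn w Sᶜ n v k +
        ∑ t ∈ Finset.range (n+1), ∑ x ∈ T,
          pre w S t v x * walkCountIn w (↑T ∪ Sᶜ) (n - t) x k
  | 0, v, k => by
      rw [Finset.sum_range_one]
      have hterm : ∀ x ∈ T, pre w S 0 v x * walkCountIn w (↑T ∪ Sᶜ) (0-0) x k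
          = if x = v then (if v ∈ S then walkCountIn w (↑T ∪ Sᶜ) 0 v k else 0) else 0 := by
        intro x _
        by_cases hxv : x = v
        · rw [hxv, pre_zero]
          by_cases hvS : v ∈ S <;> simp [hvS]
        · rw [pre_zero, if_neg (by rintro ⟨h1, h2⟩; exact hxv h1.symm), if_neg hxv, zero_mul]
      rw [Finset.sum_congr rfl hterm, Finset.sum_ite_eq' T v _]
      rw [wi_zero, wi_zero]
      by_cases hvS : v ∈ S
      · by_cases hvT : v ∈ T
        · have hvc : v ∈ (↑T ∪ Sᶜ : Set V) := Or.inl hvT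
          have : v ∉ Sᶜ := fun h => h hvS
          simp [hvT, hvS, wi_zero, hvc, this]
        · have hvc : v ∉ (↑T ∪ Sᶜ : Set V) := by
            intro h
            rcases h with h | h
            · exact hvT h
            · exact h hvS
          have : v ∉ Sᶜ := fun h => h hvS
          simp [hvT, hvc, this]
      · have hvc : v ∈ (↑T ∪ Sᶜ : Set V) := Or.inr hvS
        simp [hvS, hvc, fun (h : v ∈ T) => hvS (hT h)]
  | n + 1, v, k => by
      by_cases hvS : v ∈ S
      · have hpre1 : ∀ t ∈ Finset.range (n+1), ∑ x ∈ T,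
            pre w S (t+1) v x * walkCountIn w (↑T ∪ Sᶜ) (n+1-(t+1)) x k = 0 := by
          intro t _
          refine Finset.sum_eq_zero fun x _ => ?_
          rw [pre_succ, if_pos hvS, zero_mul]
        rw [Finset.sum_range_succ', Finset.sum_congr rfl hpre1, Finset.sum_const, smul_zero,
          zero_add]
        have hterm : ∀ x ∈ T, pre w S 0 v x * walkCountIn w (↑T ∪ Sᶜ) (n+1-0) x k
            = if x = v then walkCountIn w (↑T ∪ Sᶜ) (n+1) v k else 0 := by
          intro x _
          by_cases hxv : x = v
          · rw [hxv, pre_zero]; simp [hvS]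
          · rw [pre_zero, if_neg (by rintro ⟨h1, h2⟩; exact hxv h1.symm), if_neg hxv, zero_mul]
        rw [Finset.sum_congr rfl hterm, Finset.sum_ite_eq' T v _]
        rw [wi_start_notin (C := Sᶜ) (n+1) (fun h => h hvS) k, zero_add]
        by_cases hvT : v ∈ T
        · rw [if_pos hvT]
        · rw [if_neg hvT, wi_start_notin (n+1) (fun h => by
            rcases h with h | h
            · exact hvT h
            · exact h hvS) k]
      · -- v ∉ S
        have hvc : v ∈ (↑T ∪ Sᶜ : Set V) := Or.inr hvS
        rw [wi_succ_sum hfin hvc (hfin v).toFinset (by simp) n k]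
        have hIH : ∀ u ∈ (hfin v).toFinset, w v u * walkCountIn w (↑T ∪ Sᶜ) n u k
            = w v u * walkCountIn w Sᶜ n u k +
              w v u * ∑ t ∈ Finset.range (n+1), ∑ x ∈ T,
                pre w S t u x * walkCountIn w (↑T ∪ Sᶜ) (n - t) x k := by
          intro u _
          rw [firstVisit hfin T hT n u k, Nat.mul_add]
        rw [Finset.sum_congr rfl hIH, Finset.sum_add_distrib]
        congr 1
        · exact (wi_succ_sum hfin hvS (hfin v).toFinset (by simp) n k).symm
        · rw [Finset.sum_range_succ']
          have h0 : ∑ x ∈ T, pre w S 0 v x * walkCountIn w (↑T ∪ Sᶜ) (n+1-0) x k = 0 := by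
            refine Finset.sum_eq_zero fun x hx => ?_
            rw [pre_zero, if_neg (fun h => hvS h.2), zero_mul]
          rw [h0, add_zero]
          have hterm : ∀ t ∈ Finset.range (n+1), ∑ x ∈ T,
              pre w S (t+1) v x * walkCountIn w (↑T ∪ Sᶜ) (n+1-(t+1)) x k
              = ∑ x ∈ T, (∑ u ∈ (hfin v).toFinset, w v u * pre w S t u x) *
                  walkCountIn w (↑T ∪ Sᶜ) (n-t) x k := by
            intro t _
            refine Finset.sum_congr rfl fun x _ => ?_
            rw [pre_succ_sum hfin t hvS x, Nat.succ_sub_succ]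
          rw [Finset.sum_congr rfl hterm, sum_swap_mul]


/-- out-degree -/
noncomputable def degS (w : V → V → ℕ) (u : V) : ℕ := ∑ᶠ v, w u v

lemma degS_eq (hfin : ∀ u : V, {v | w u v ≠ 0}.Finite) (u : V) :
    degS w u = ∑ v ∈ (hfin u).toFinset, w u v :=
  finsum_eq_finset_sum_of_support_subset _ (by intro v hv; simpa using hv)

lemma degS_le_one (hout : ∀ u ∉ S, ∃ v₀, w u v₀ ≤ 1 ∧ ∀ v, v ≠ v₀ → w u v = 0)
    {u : V} (hu : u ∉ S) : degS w u ≤ 1 := by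
  obtain ⟨v₀, hv₀, hz⟩ := hout u hu
  rw [degS, finsum_eq_single _ v₀ (fun v hv => hz v hv)]
  exact hv₀

/-- number of walks of length `r` from `s' ∈ S` to `k` whose vertices after time 0 avoid `S`. -/
noncomputable def tl (w : V → V → ℕ) (S : Set V) : ℕ → V → V → ℕ
  | 0, s', k => if s' = k ∧ s' ∈ S then 1 else 0
  | r + 1, s', k => if s' ∈ S then ∑ᶠ u, w s' u * walkCountIn w Sᶜ r u k else 0

lemma tl_zero (s' k : V) : tl w S 0 s' k = if s' = k ∧ s' ∈ S then 1 else 0 := rfl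
lemma tl_succ (r : ℕ) (s' k : V) :
    tl w S (r+1) s' k = if s' ∈ S then ∑ᶠ u, w s' u * walkCountIn w Sᶜ r u k else 0 := rfl

lemma tl_succ_sum (hfin : ∀ u : V, {v | w u v ≠ 0}.Finite) (r : ℕ) {s' : V} (hs : s' ∈ S) (k : V) :
    tl w S (r+1) s' k = ∑ u ∈ (hfin s').toFinset, w s' u * walkCountIn w Sᶜ r u k := by
  rw [tl_succ, if_pos hs]
  refine finsum_eq_finset_sum_of_support_subset _ ?_
  intro u hu
  simp only [Function.mem_support, ne_eq] at hu
  simp only [Set.Finite.coe_toFinset, Set.mem_setOf_eq]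
  exact fun h0 => hu (by simp [h0])

lemma tl_total (hfin : ∀ u : V, {v | w u v ≠ 0}.Finite)
    (hout : ∀ u ∉ S, ∃ v₀, w u v₀ ≤ 1 ∧ ∀ v, v ≠ v₀ → w u v = 0)
    (r : ℕ) (s' : V) : ∑ᶠ k, tl w S r s' k ≤ max 1 (degS w s') := by
  classical
  cases r with
  | zero =>
      rw [finsum_eq_single _ s' (fun k hk => by
        rw [tl_zero, if_neg (by rintro ⟨h1, h2⟩; exact hk h1.symm)])]
      rw [tl_zero]
      refine le_max_of_le_left ?_
      split_ifs <;> simp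
  | succ r =>
      by_cases hs : s' ∈ S
      · set F : Finset V := (hfin s').toFinset.biUnion (fun u => (suppWI (C := Sᶜ) hfin r u).toFinset)
          with hF
        have hsupp : Function.support (fun k => tl w S (r+1) s' k) ⊆ ↑F := by
          intro k hk
          simp only [Function.mem_support, ne_eq, tl_succ, if_pos hs] at hk
          obtain ⟨u, hu⟩ := finsum_ne_zero_exists hk
          simp only [hF, Finset.coe_biUnion, Set.mem_iUnion, Finset.mem_coe,
            Set.Finite.mem_toFinset]
          exact ⟨u, by simp only [Set.mem_setOf_eq]; exact fun h0 => hu (by simp [h0]),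
            by simp only [Set.mem_setOf_eq]; exact fun h0 => hu (by simp [h0])⟩
        rw [finsum_eq_finset_sum_of_support_subset _ hsupp]
        have : ∀ k ∈ F, tl w S (r+1) s' k
            = ∑ u ∈ (hfin s').toFinset, w s' u * walkCountIn w Sᶜ r u k :=
          fun k _ => tl_succ_sum hfin r hs k
        rw [Finset.sum_congr rfl this, Finset.sum_comm]
        refine le_max_of_le_right ?_
        rw [degS_eq hfin]
        refine Finset.sum_le_sum fun u _ => ?_
        rw [← Finset.mul_sum]
        calc w s' u * ∑ k ∈ F, walkCountIn w Sᶜ r u k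
            ≤ w s' u * qt w Sᶜ r u := by
              refine Nat.mul_le_mul_left _ ?_
              exact finsetSum_le_finsum (suppWI hfin r u) F
          _ ≤ w s' u * 1 := Nat.mul_le_mul_left _ (qtSc_le_one hfin hout r u)
          _ = w s' u := by ring
      · rw [finsum_congr (fun k => by rw [tl_succ, if_neg hs]), finsum_zero]
        exact le_max_of_le_left (Nat.zero_le _)

/-- Last-`S`-visit decomposition. -/
lemma lastVisit (hfin : ∀ u : V, {v | w u v ≠ 0}.Finite) (hS : S.Finite) :
    ∀ (m : ℕ) (v k : V), walkCount w m v k =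
      walkCountIn w Sᶜ m v k +
        ∑ t ∈ Finset.range (m+1), ∑ s' ∈ hS.toFinset,
          walkCount w t v s' * tl w S (m - t) s' k
  | 0, v, k => by
      rw [Finset.sum_range_one]
      have hterm : ∀ s' ∈ hS.toFinset, walkCount w 0 v s' * tl w S (0-0) s' k
          = if s' = v then tl w S 0 v k else 0 := by
        intro s' _
        by_cases hsv : s' = v
        · rw [hsv, wc_zero]; simp
        · rw [wc_zero, if_neg (fun h => hsv h.symm), if_neg hsv, zero_mul]
      rw [Finset.sum_congr rfl hterm, Finset.sum_ite_eq' hS.toFinset v _]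
      rw [wc_zero, wi_zero, tl_zero]
      by_cases hvS : v ∈ S
      · simp [Set.mem_compl_iff, hvS, hS.mem_toFinset]
      · simp [Set.mem_compl_iff, hvS, hS.mem_toFinset]
  | m + 1, v, k => by
      rw [wc_succ_sum hfin (hfin v).toFinset (by simp) m k]
      have hIH : ∀ u ∈ (hfin v).toFinset, w v u * walkCount w m u k
          = w v u * walkCountIn w Sᶜ m u k +
            w v u * ∑ t ∈ Finset.range (m+1), ∑ s' ∈ hS.toFinset,
              walkCount w t u s' * tl w S (m - t) s' k := by
        intro u _
        rw [lastVisit hfin hS m u k, Nat.mul_add]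
      rw [Finset.sum_congr rfl hIH, Finset.sum_add_distrib]
      rw [Finset.sum_range_succ']
      have hterm : ∀ t ∈ Finset.range (m+1), ∑ s' ∈ hS.toFinset,
          walkCount w (t+1) v s' * tl w S (m+1-(t+1)) s' k
          = ∑ s' ∈ hS.toFinset, (∑ u ∈ (hfin v).toFinset, w v u * walkCount w t u s') *
              tl w S (m-t) s' k := by
        intro t _
        refine Finset.sum_congr rfl fun s' _ => ?_
        rw [wc_succ_sum hfin (hfin v).toFinset (by simp) t s', Nat.succ_sub_succ]
      rw [Finset.sum_congr rfl hterm, sum_swap_mul]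
      have h0 : ∑ s' ∈ hS.toFinset, walkCount w 0 v s' * tl w S (m+1-0) s' k
          = if v ∈ hS.toFinset then tl w S (m+1) v k else 0 := by
        have : ∀ s' ∈ hS.toFinset, walkCount w 0 v s' * tl w S (m+1-0) s' k
            = if s' = v then tl w S (m+1) v k else 0 := by
          intro s' _
          by_cases hsv : s' = v
          · rw [hsv, wc_zero]; simp
          · rw [wc_zero, if_neg (fun h => hsv h.symm), if_neg hsv, zero_mul]
        rw [Finset.sum_congr rfl this, Finset.sum_ite_eq' hS.toFinset v _]
      rw [h0]
      have key : ∑ u ∈ (hfin v).toFinset, w v u * walkCountIn w Sᶜ m u k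
          = walkCountIn w Sᶜ (m+1) v k + (if v ∈ hS.toFinset then tl w S (m+1) v k else 0) := by
        by_cases hvS : v ∈ S
        · rw [wi_start_notin (C := Sᶜ) (m+1) (fun h => h hvS) k, zero_add,
            if_pos (hS.mem_toFinset.mpr hvS), tl_succ_sum hfin m hvS k]
        · rw [if_neg (fun h => hvS (hS.mem_toFinset.mp h)), add_zero,
            wi_succ_sum hfin (C := Sᶜ) hvS (hfin v).toFinset (by simp) m k]
      rw [key]
      ring


lemma sum_swap_mul1 {α γ : Type*} (R : Finset α) (F : Finset γ)
    (a : γ → ℕ) (b : α → γ → ℕ) (c : α → ℕ) :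
    ∑ t ∈ R, (∑ u ∈ F, a u * b t u) * c t
      = ∑ u ∈ F, a u * ∑ t ∈ R, b t u * c t := by
  calc ∑ t ∈ R, (∑ u ∈ F, a u * b t u) * c t
      = ∑ t ∈ R, ∑ u ∈ F, a u * (b t u * c t) := by
        refine Finset.sum_congr rfl fun t _ => ?_
        rw [Finset.sum_mul]
        exact Finset.sum_congr rfl fun u _ => mul_assoc _ _ _
    _ = ∑ u ∈ F, ∑ t ∈ R, a u * (b t u * c t) := Finset.sum_comm
    _ = ∑ u ∈ F, a u * ∑ t ∈ R, b t u * c t := by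
        refine Finset.sum_congr rfl fun u _ => ?_
        rw [Finset.mul_sum]

/-- walks from `x` to `k` in `C` which do not revisit `x` after time 0. -/
noncomputable def avar (w : V → V → ℕ) (C : Set V) (x : V) : ℕ → V → ℕ
  | 0, k => if x = k ∧ x ∈ C then 1 else 0
  | γ + 1, k => if x ∈ C then ∑ᶠ u, w x u * walkCountIn w (C \ {x}) γ u k else 0

lemma avar_zero (x k : V) : avar w C x 0 k = if x = k ∧ x ∈ C then 1 else 0 := rfl
lemma avar_succ (x : V) (γ : ℕ) (k : V) :
    avar w C x (γ+1) k = if x ∈ C then ∑ᶠ u, w x u * walkCountIn w (C \ {x}) γ u k else 0 := rfl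

lemma avar_succ_sum (hfin : ∀ u : V, {v | w u v ≠ 0}.Finite) {x : V} (hx : x ∈ C) (γ : ℕ) (k : V) :
    avar w C x (γ+1) k = ∑ u ∈ (hfin x).toFinset, w x u * walkCountIn w (C \ {x}) γ u k := by
  rw [avar_succ, if_pos hx]
  refine finsum_eq_finset_sum_of_support_subset _ ?_
  intro u hu
  simp only [Function.mem_support, ne_eq] at hu
  simp only [Set.Finite.coe_toFinset, Set.mem_setOf_eq]
  exact fun h0 => hu (by simp [h0])

/-- Renewal (last-visit-to-`x`) decomposition. -/
lemma renewal (hfin : ∀ u : V, {v | w u v ≠ 0}.Finite) (x : V) :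
    ∀ (n : ℕ) (v k : V), walkCountIn w C n v k =
      walkCountIn w (C \ {x}) n v k +
        ∑ β ∈ Finset.range (n+1), walkCountIn w C β v x * avar w C x (n - β) k
  | 0, v, k => by
      rw [Finset.sum_range_one, wi_zero, wi_zero, wi_zero, avar_zero]
      by_cases hvx : v = x
      · rw [hvx]
        have h1 : ¬(x = k ∧ x ∈ C \ {x}) := fun h => h.2.2 rfl
        rw [if_neg h1, zero_add]
        by_cases hxC : x ∈ C <;> simp [hxC]
      · have h2 : ¬(v = x ∧ v ∈ C) := fun h => hvx h.1
        rw [if_neg h2, zero_mul, add_zero]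
        by_cases hvk : v = k
        · subst hvk
          by_cases hvC : v ∈ C <;> simp [Set.mem_diff, Set.mem_singleton_iff, hvC, hvx]
        · simp [hvk]
  | n + 1, v, k => by
      by_cases hvC : v ∈ C
      · rw [wi_succ_sum hfin hvC (hfin v).toFinset (by simp) n k]
        have hIH : ∀ u ∈ (hfin v).toFinset, w v u * walkCountIn w C n u k
            = w v u * walkCountIn w (C \ {x}) n u k +
              w v u * ∑ β ∈ Finset.range (n+1), walkCountIn w C β u x * avar w C x (n - β) k := by
          intro u _
          rw [renewal hfin x n u k, Nat.mul_add]
        rw [Finset.sum_congr rfl hIH, Finset.sum_add_distrib, Finset.sum_range_succ']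
        have hterm : ∀ β ∈ Finset.range (n+1),
            walkCountIn w C (β+1) v x * avar w C x (n+1-(β+1)) k
            = (∑ u ∈ (hfin v).toFinset, w v u * walkCountIn w C β u x) * avar w C x (n-β) k := by
          intro β _
          rw [wi_succ_sum hfin hvC (hfin v).toFinset (by simp) β x, Nat.succ_sub_succ]
        rw [Finset.sum_congr rfl hterm, sum_swap_mul1]
        have h0 : walkCountIn w C 0 v x * avar w C x (n+1-0) k
            = if v = x then avar w C x (n+1) k else 0 := by
          rw [Nat.sub_zero, wi_zero]
          by_cases hvx : v = x
          · rw [if_pos ⟨hvx, hvC⟩, one_mul, if_pos hvx]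
          · rw [if_neg (fun h => hvx h.1), zero_mul, if_neg hvx]
        rw [h0]
        by_cases hvx : v = x
        · rw [if_pos hvx]
          have hxC : x ∈ C := hvx ▸ hvC
          have h1 : walkCountIn w (C \ {x}) (n+1) v k = 0 :=
            wi_start_notin (n+1) (fun h => h.2 (Set.mem_singleton_iff.mpr hvx)) k
          have h2 : avar w C x (n+1) k
              = ∑ u ∈ (hfin v).toFinset, w v u * walkCountIn w (C \ {x}) n u k := by
            rw [avar_succ_sum hfin hxC n k, hvx]
          rw [h1, zero_add, h2]
          ring
        · rw [if_neg hvx, add_zero]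
          have hvC' : v ∈ C \ {x} := ⟨hvC, fun h => hvx (Set.mem_singleton_iff.mp h)⟩
          rw [wi_succ_sum hfin hvC' (hfin v).toFinset (by simp) n k]
      · rw [wi_start_notin (n+1) hvC k,
          wi_start_notin (n+1) (fun h => hvC h.1) k, zero_add]
        refine (Finset.sum_eq_zero ?_).symm
        intro β hβ
        cases β with
        | zero => rw [wi_zero, if_neg (fun h => hvC h.2), zero_mul]
        | succ β' => rw [wi_succ, if_neg hvC, zero_mul]


lemma comp_ge (hfin : ∀ u : V, {v | w u v ≠ 0}.Finite) :
    ∀ (a : ℕ) (b : ℕ) (i j k : V),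
      walkCount w a i j * walkCount w b j k ≤ walkCount w (a+b) i k
  | 0, b, i, j, k => by
      by_cases hij : i = j
      · rw [wc_zero, if_pos hij, one_mul, hij, Nat.zero_add]
      · rw [wc_zero, if_neg hij, zero_mul]
        exact Nat.zero_le _
  | a + 1, b, i, j, k => by
      have hadd : a + 1 + b = (a + b) + 1 := by omega
      rw [hadd, wc_succ_sum hfin (hfin i).toFinset (by simp) (a+b) k,
        wc_succ_sum hfin (hfin i).toFinset (by simp) a j, Finset.sum_mul]
      refine Finset.sum_le_sum fun v _ => ?_
      rw [mul_assoc]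
      exact Nat.mul_le_mul_left _ (comp_ge hfin a b v j k)

lemma one_le_wc_mul (hfin : ∀ u : V, {v | w u v ≠ 0}.Finite) {n₀ : ℕ} {s : V}
    (h1 : 1 ≤ walkCount w n₀ s s) : ∀ k : ℕ, 1 ≤ walkCount w (k * n₀ + n₀) s s
  | 0 => by simpa using h1
  | k + 1 => by
      have : 1 * 1 ≤ walkCount w (k * n₀ + n₀) s s * walkCount w n₀ s s :=
        Nat.mul_le_mul (one_le_wc_mul hfin h1 k) h1
      calc (1 : ℕ) = 1 * 1 := by ring
        _ ≤ walkCount w (k * n₀ + n₀) s s * walkCount w n₀ s s := this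
        _ ≤ walkCount w ((k*n₀+n₀) + n₀) s s := comp_ge hfin _ _ s s s
        _ = walkCount w ((k+1) * n₀ + n₀) s s := by ring_nf

section through
variable (hfin : ∀ u : V, {v | w u v ≠ 0}.Finite) (hS : S.Finite)
    (hthrough : ∀ n, 1 ≤ n → ∀ i, walkCountIn w Sᶜ n i i = 0)
include hfin hS hthrough

lemma wc_diag_decomp {n : ℕ} (hn : 1 ≤ n) (i : V) :
    walkCount w n i i = ∑ t ∈ Finset.range (n+1), ∑ x ∈ hS.toFinset,
      pre w S t i x * walkCountIn w (↑hS.toFinset ∪ Sᶜ) (n - t) x i := by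
  have key : walkCount w n i i = walkCountIn w (↑hS.toFinset ∪ Sᶜ) n i i := by
    rw [hS.coe_toFinset, Set.union_compl_self, wi_univ]
  rw [key, firstVisit hfin hS.toFinset (by rw [hS.coe_toFinset]) n i i,
    hthrough n hn i, zero_add]

lemma suppDiag {n : ℕ} (hn : 1 ≤ n) : {i | walkCount w n i i ≠ 0}.Finite := by
  refine Set.Finite.subset
    (Set.Finite.biUnion hS (fun x _ => Set.Finite.biUnion (Set.finite_Iic n)
      (fun r _ => suppWC hfin r x))) ?_
  intro i hi
  simp only [Set.mem_setOf_eq] at hi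
  rw [wc_diag_decomp hfin hS hthrough hn i] at hi
  obtain ⟨t, ht, hts⟩ := Finset.exists_ne_zero_of_sum_ne_zero hi
  obtain ⟨x, hx, hxs⟩ := Finset.exists_ne_zero_of_sum_ne_zero hts
  have h2 : walkCountIn w (↑hS.toFinset ∪ Sᶜ) (n - t) x i ≠ 0 := fun h0 => hxs (by rw [h0, mul_zero])
  have h3 : walkCount w (n - t) x i ≠ 0 := by
    intro h0
    exact h2 (Nat.le_zero.mp (h0 ▸ wi_le_wc hfin (n-t) x i))
  simp only [Set.mem_iUnion]
  exact ⟨x, hS.mem_toFinset.mp hx, n - t, Set.mem_Iic.mpr (Nat.sub_le n t), h3⟩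

/-- closed walk count -/
lemma wc_le_cc (hn1 : 1 ≤ (n : ℕ)) (s : V) :
    walkCount w n s s ≤ ∑ᶠ i, walkCount w n i i :=
  single_le_finsum s (suppDiag hfin hS hthrough hn1) (fun _ => Nat.zero_le _)

lemma cc_le (hout : ∀ u ∉ S, ∃ v₀, w u v₀ ≤ 1 ∧ ∀ v, v ≠ v₀ → w u v = 0)
    {n : ℕ} (hn : 1 ≤ n) :
    ∑ᶠ i, walkCount w n i i ≤ ∑ t ∈ Finset.range (n+1), ∑ x ∈ hS.toFinset, pt w (n-t) x := by
  classical
  set E := (suppDiag hfin hS hthrough hn).toFinset with hE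
  have h1 : ∑ᶠ i, walkCount w n i i = ∑ i ∈ E, walkCount w n i i :=
    finsum_eq_finset_sum_of_support_subset _ (by
      intro i hi
      simp only [hE, Set.Finite.coe_toFinset]
      exact hi)
  rw [h1, Finset.sum_congr rfl (fun i _ => wc_diag_decomp hfin hS hthrough hn i)]
  rw [Finset.sum_comm]
  refine Finset.sum_le_sum fun t _ => ?_
  rw [Finset.sum_comm]
  refine Finset.sum_le_sum fun x _ => ?_
  calc ∑ i ∈ E, pre w S t i x * walkCountIn w (↑hS.toFinset ∪ Sᶜ) (n - t) x i
      ≤ ∑ i ∈ E, walkCount w (n-t) x i := by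
        refine Finset.sum_le_sum fun i _ => ?_
        calc pre w S t i x * walkCountIn w (↑hS.toFinset ∪ Sᶜ) (n - t) x i
            ≤ 1 * walkCount w (n-t) x i :=
              Nat.mul_le_mul (pre_le_one hout t i x) (wi_le_wc hfin (n-t) x i)
          _ = walkCount w (n-t) x i := one_mul _
    _ ≤ pt w (n-t) x := finsetSum_le_finsum (suppWC hfin (n-t) x) E

lemma exists_S_cycle (hexists : ∃ n, 1 ≤ n ∧ ∃ i, walkCount w n i i ≠ 0) :
    ∃ s ∈ S, ∃ m, 1 ≤ m ∧ 1 ≤ walkCount w m s s := by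
  obtain ⟨n₀, hn₀, i₀, hI⟩ := hexists
  rw [wc_diag_decomp hfin hS hthrough hn₀ i₀] at hI
  obtain ⟨t, ht, hts⟩ := Finset.exists_ne_zero_of_sum_ne_zero hI
  obtain ⟨x, hx, hxs⟩ := Finset.exists_ne_zero_of_sum_ne_zero hts
  have hpre : pre w S t i₀ x ≠ 0 := fun h0 => hxs (by simp [h0])
  have h2 : walkCountIn w (↑hS.toFinset ∪ Sᶜ) (n₀ - t) x i₀ ≠ 0 := fun h0 => hxs (by rw [h0, mul_zero])
  have h3 : 1 ≤ walkCount w (n₀ - t) x i₀ := by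
    have h5 := wi_le_wc hfin (C := ↑hS.toFinset ∪ Sᶜ) (n₀-t) x i₀
    have h6 : walkCountIn w (↑hS.toFinset ∪ Sᶜ) (n₀ - t) x i₀ ≠ 0 := h2
    omega
  have h4 : 1 ≤ walkCount w t i₀ x := by
    have := pre_le_wc (S := S) hfin t i₀ x
    omega
  refine ⟨x, hS.mem_toFinset.mp hx, n₀, hn₀, ?_⟩
  have h5 : walkCount w (n₀ - t) x i₀ * walkCount w t i₀ x ≤ walkCount w ((n₀ - t) + t) x x :=
    comp_ge hfin _ _ x i₀ x
  have ht' : t ≤ n₀ := by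
    simp only [Finset.mem_range] at ht
    omega
  rw [Nat.sub_add_cancel ht'] at h5
  calc (1:ℕ) = 1 * 1 := by ring
    _ ≤ walkCount w (n₀ - t) x i₀ * walkCount w t i₀ x := Nat.mul_le_mul h3 h4
    _ ≤ walkCount w n₀ x x := h5

end through


open scoped NNReal

lemma erase_union_compl {T : Finset V} (hT : ↑T ⊆ S) {x₀ : V} (hx₀ : x₀ ∈ T) :
    ((↑T ∪ Sᶜ) \ {x₀} : Set V) = (↑(T.erase x₀) ∪ Sᶜ : Set V) := by
  have hx₀S : x₀ ∈ S := hT hx₀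
  have hvne : ∀ v : V, v ∉ S → v ≠ x₀ := fun v h heq => h (heq ▸ hx₀S)
  ext v
  simp only [Set.mem_diff, Set.mem_union, Finset.coe_erase, Set.mem_singleton_iff,
    Set.mem_compl_iff, Finset.mem_coe]
  have := hvne v
  tauto

lemma Ebound (hfin : ∀ u : V, {v | w u v ≠ 0}.Finite)
    (hout : ∀ u ∉ S, ∃ v₀, w u v₀ ≤ 1 ∧ ∀ v, v ≠ v₀ → w u v = 0)
    {ρx C₀ D : ℝ≥0} (hx1 : 1 ≤ ρx) (hC₀ : 1 ≤ C₀) (hD1 : 1 ≤ D)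
    (hD : ∀ s ∈ S, ((degS w s : ℕ) : ℝ≥0) ≤ D)
    (hcb : ∀ (β : ℕ) (s : V), ((walkCount w β s s : ℕ) : ℝ≥0) ≤ C₀ * ρx ^ β) :
    ∀ (N : ℕ) (T : Finset V), T.card ≤ N → ↑T ⊆ S →
      ∃ (K : ℝ≥0) (B : ℕ), 1 ≤ K ∧ ∀ (n : ℕ) (v s' : V), s' ∈ T →
        ((walkCountIn w (↑T ∪ Sᶜ) n v s' : ℕ) : ℝ≥0) ≤ K * ((n:ℝ≥0)+1)^B * ρx^n := by
  intro N
  induction N with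
  | zero =>
      intro T hcard _
      refine ⟨1, 0, le_refl _, fun n v s' hs' => ?_⟩
      have : T = ∅ := Finset.card_eq_zero.mp (Nat.le_zero.mp hcard)
      rw [this] at hs'
      exact absurd hs' (Finset.notMem_empty s')
  | succ N IH =>
      intro T hcard hT
      have IHall : ∀ x₀ : V, ∃ (K : ℝ≥0), ∃ (B : ℕ), 1 ≤ K ∧ (x₀ ∈ T → ∀ (n : ℕ) (v s' : V),
          s' ∈ T.erase x₀ →
          ((walkCountIn w (↑(T.erase x₀) ∪ Sᶜ) n v s' : ℕ) : ℝ≥0)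
            ≤ K * ((n:ℝ≥0)+1)^B * ρx^n) := by
        intro x₀
        by_cases hx₀ : x₀ ∈ T
        · obtain ⟨K, B, hK, hbd⟩ := IH (T.erase x₀)
            (by have := Finset.card_erase_of_mem hx₀; omega)
            (fun v hv => hT (Finset.mem_of_mem_erase hv))
          exact ⟨K, B, hK, fun _ => hbd⟩
        · exact ⟨1, 0, le_refl _, fun h => absurd h hx₀⟩
      choose Kf Bf hKf hbdf using IHall
      classical
      set K' : ℝ≥0 := max 1 (T.sup Kf) with hK'def
      set B' : ℕ := T.sup Bf with hB'def
      have hK'1 : 1 ≤ K' := le_max_left _ _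
      have hKfK : ∀ x₀ ∈ T, Kf x₀ ≤ K' := fun x₀ h => le_max_of_le_right (Finset.le_sup h)
      have hBfB : ∀ x₀ ∈ T, Bf x₀ ≤ B' := fun x₀ h => Finset.le_sup h
      have hnpow : ∀ (n : ℕ) (b b' : ℕ), b ≤ b' → ((n:ℝ≥0)+1)^b ≤ ((n:ℝ≥0)+1)^b' := by
        intro n b b' hbb
        exact pow_le_pow_right₀ (by simp) hbb
      have honepow : ∀ (n b : ℕ), (1:ℝ≥0) ≤ ((n:ℝ≥0)+1)^b := by
        intro n b
        have := hnpow n 0 b (Nat.zero_le b)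
        simpa using this
      have hrone : ∀ m : ℕ, (1:ℝ≥0) ≤ ρx^m := by
        intro m
        have := pow_le_pow_right₀ hx1 (Nat.zero_le m)
        simpa using this
      have hrmono : ∀ {a b : ℕ}, a ≤ b → ρx^a ≤ ρx^b := fun hab => pow_le_pow_right₀ hx1 hab
      have hone : (1:ℝ≥0) ≤ C₀ * D * K' := by
        have := mul_le_mul' (mul_le_mul' hC₀ hD1) hK'1
        simpa using this
      have claim1 : ∀ (n : ℕ) (x₀ s' : V), x₀ ∈ T → s' ∈ T →
          ((walkCountIn w (↑T ∪ Sᶜ) n x₀ s' : ℕ) : ℝ≥0)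
            ≤ (C₀ * D * K') * ((n:ℝ≥0)+1)^(B'+1) * ρx^n := by
        intro n x₀ s' hx₀ hs'
        by_cases hxs : x₀ = s'
        · calc ((walkCountIn w (↑T ∪ Sᶜ) n x₀ s' : ℕ) : ℝ≥0)
              ≤ ((walkCount w n x₀ s' : ℕ) : ℝ≥0) := Nat.cast_le.mpr (wi_le_wc hfin n x₀ s')
            _ = ((walkCount w n x₀ x₀ : ℕ) : ℝ≥0) := by rw [hxs]
            _ ≤ C₀ * ρx ^ n := hcb n x₀
            _ = C₀ * 1 * 1 * ρx ^ n := by ring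
            _ ≤ C₀ * (D * K') * ((n:ℝ≥0)+1)^(B'+1) * ρx^n := by
                gcongr
                · simpa using mul_le_mul' hD1 hK'1
                · exact honepow n (B'+1)
            _ = (C₀ * D * K') * ((n:ℝ≥0)+1)^(B'+1) * ρx^n := by ring
        · have hx₀C : x₀ ∈ (↑T ∪ Sᶜ : Set V) := Or.inl hx₀
          have hs'T' : s' ∈ T.erase x₀ := Finset.mem_erase.mpr ⟨fun h => hxs h.symm, hs'⟩
          have havar : ∀ γ : ℕ, γ ≤ n → ((avar w (↑T ∪ Sᶜ) x₀ γ s' : ℕ) : ℝ≥0)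
              ≤ D * K' * ((n:ℝ≥0)+1)^B' * ρx^γ := by
            intro γ hγ
            cases γ with
            | zero =>
                rw [avar_zero, if_neg (fun h => hxs h.1)]
                simp
            | succ γ' =>
                rw [avar_succ_sum hfin hx₀C γ' s', erase_union_compl hT hx₀,
                  Nat.cast_sum]
                simp only [Nat.cast_mul]
                calc ∑ u ∈ (hfin x₀).toFinset,
                    ((w x₀ u : ℕ):ℝ≥0) * ((walkCountIn w (↑(T.erase x₀) ∪ Sᶜ) γ' u s' : ℕ):ℝ≥0)
                    ≤ ∑ u ∈ (hfin x₀).toFinset,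
                      ((w x₀ u : ℕ):ℝ≥0) * (Kf x₀ * ((γ':ℝ≥0)+1)^(Bf x₀) * ρx^γ') := by
                      refine Finset.sum_le_sum fun u _ => ?_
                      exact mul_le_mul_right (hbdf x₀ hx₀ γ' u s' hs'T') _
                  _ = (∑ u ∈ (hfin x₀).toFinset, ((w x₀ u : ℕ):ℝ≥0)) *
                        (Kf x₀ * ((γ':ℝ≥0)+1)^(Bf x₀) * ρx^γ') := by
                      rw [Finset.sum_mul]
                  _ ≤ D * (K' * ((n:ℝ≥0)+1)^B' * ρx^(γ'+1)) := by
                      refine mul_le_mul' ?_ ?_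
                      · have : (∑ u ∈ (hfin x₀).toFinset, ((w x₀ u : ℕ):ℝ≥0))
                            = ((degS w x₀ : ℕ) : ℝ≥0) := by
                          rw [degS_eq hfin x₀]
                          push_cast
                          rfl
                        rw [this]
                        exact hD x₀ (hT hx₀)
                      · refine mul_le_mul' (mul_le_mul' (hKfK x₀ hx₀) ?_) (hrmono (Nat.le_succ γ'))
                        calc ((γ':ℝ≥0)+1)^(Bf x₀) ≤ ((n:ℝ≥0)+1)^(Bf x₀) := by
                              gcongr
                              exact_mod_cast Nat.le_of_succ_le hγ
                          _ ≤ ((n:ℝ≥0)+1)^B' := hnpow n _ _ (hBfB x₀ hx₀)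
                  _ = D * K' * ((n:ℝ≥0)+1)^B' * ρx^(γ'+1) := by ring
          have hren := renewal (C := (↑T ∪ Sᶜ : Set V)) hfin x₀ n x₀ s'
          rw [wi_start_notin (C := ((↑T ∪ Sᶜ : Set V) \ {x₀})) n
            (fun h => h.2 rfl) s', zero_add] at hren
          rw [hren]
          push_cast
          have hterm : ∀ β ∈ Finset.range (n+1),
              ((walkCountIn w (↑T ∪ Sᶜ) β x₀ x₀ : ℕ):ℝ≥0) *
                ((avar w (↑T ∪ Sᶜ) x₀ (n - β) s' : ℕ):ℝ≥0)
              ≤ (C₀ * D * K') * ((n:ℝ≥0)+1)^B' * ρx^n := by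
            intro β hβ
            have hβn : β ≤ n := by simp only [Finset.mem_range] at hβ; omega
            calc ((walkCountIn w (↑T ∪ Sᶜ) β x₀ x₀ : ℕ):ℝ≥0) *
                ((avar w (↑T ∪ Sᶜ) x₀ (n - β) s' : ℕ):ℝ≥0)
                ≤ (C₀ * ρx^β) * (D * K' * ((n:ℝ≥0)+1)^B' * ρx^(n-β)) := by
                  refine mul_le_mul' ?_ (havar (n-β) (Nat.sub_le n β))
                  calc ((walkCountIn w (↑T ∪ Sᶜ) β x₀ x₀ : ℕ):ℝ≥0)
                      ≤ ((walkCount w β x₀ x₀ : ℕ):ℝ≥0) := Nat.cast_le.mpr (wi_le_wc hfin β x₀ x₀)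
                    _ ≤ C₀ * ρx^β := hcb β x₀
              _ = (C₀ * D * K') * ((n:ℝ≥0)+1)^B' * (ρx^β * ρx^(n-β)) := by ring
              _ = (C₀ * D * K') * ((n:ℝ≥0)+1)^B' * ρx^n := by
                  rw [← pow_add, Nat.add_sub_cancel' hβn]
          calc ∑ β ∈ Finset.range (n+1),
              ((walkCountIn w (↑T ∪ Sᶜ) β x₀ x₀ : ℕ):ℝ≥0) *
                ((avar w (↑T ∪ Sᶜ) x₀ (n - β) s' : ℕ):ℝ≥0)
              ≤ (Finset.range (n+1)).card • ((C₀ * D * K') * ((n:ℝ≥0)+1)^B' * ρx^n) :=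
                Finset.sum_le_card_nsmul _ _ _ hterm
            _ = ((n:ℝ≥0)+1) * ((C₀ * D * K') * ((n:ℝ≥0)+1)^B' * ρx^n) := by
                rw [Finset.card_range, nsmul_eq_mul]
                push_cast
                ring
            _ = (C₀ * D * K') * (((n:ℝ≥0)+1)^B' * ((n:ℝ≥0)+1)) * ρx^n := by ring
            _ = (C₀ * D * K') * ((n:ℝ≥0)+1)^(B'+1) * ρx^n := by rw [pow_succ]
      -- Step A : general source
      refine ⟨(C₀ * D * K') * ((T.card:ℝ≥0)+1), B'+2, ?_, ?_⟩
      · calc (1:ℝ≥0) = 1 * 1 := by ring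
          _ ≤ (C₀ * D * K') * ((T.card:ℝ≥0)+1) := mul_le_mul' hone (by simp)
      intro n v s' hs'
      have hfv := firstVisit hfin T hT n v s'
      have hnotSc : s' ∉ Sᶜ := fun h => h (hT hs')
      rw [wi_end_notin (C := Sᶜ) n v hnotSc, zero_add] at hfv
      rw [hfv]
      push_cast
      have hterm : ∀ t ∈ Finset.range (n+1),
          ∑ y ∈ T, ((pre w S t v y : ℕ):ℝ≥0) *
            ((walkCountIn w (↑T ∪ Sᶜ) (n - t) y s' : ℕ):ℝ≥0)
          ≤ (T.card : ℝ≥0) * ((C₀ * D * K') * ((n:ℝ≥0)+1)^(B'+1) * ρx^n) := by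
        intro t ht
        have hin : ∀ y ∈ T, ((pre w S t v y : ℕ):ℝ≥0) *
            ((walkCountIn w (↑T ∪ Sᶜ) (n - t) y s' : ℕ):ℝ≥0)
            ≤ (C₀ * D * K') * ((n:ℝ≥0)+1)^(B'+1) * ρx^n := by
          intro y hy
          calc ((pre w S t v y : ℕ):ℝ≥0) *
              ((walkCountIn w (↑T ∪ Sᶜ) (n - t) y s' : ℕ):ℝ≥0)
              ≤ 1 * ((C₀ * D * K') * (((n - t : ℕ):ℝ≥0)+1)^(B'+1) * ρx^(n-t)) := by
                refine mul_le_mul' ?_ (claim1 (n-t) y s' hy hs')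
                exact_mod_cast pre_le_one hout t v y
            _ ≤ 1 * ((C₀ * D * K') * ((n:ℝ≥0)+1)^(B'+1) * ρx^n) := by
                gcongr
                · exact_mod_cast Nat.sub_le n t
                · exact Nat.sub_le n t
            _ = (C₀ * D * K') * ((n:ℝ≥0)+1)^(B'+1) * ρx^n := one_mul _
        calc ∑ y ∈ T, ((pre w S t v y : ℕ):ℝ≥0) *
            ((walkCountIn w (↑T ∪ Sᶜ) (n - t) y s' : ℕ):ℝ≥0)
            ≤ T.card • ((C₀ * D * K') * ((n:ℝ≥0)+1)^(B'+1) * ρx^n) :=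
              Finset.sum_le_card_nsmul _ _ _ hin
          _ = (T.card : ℝ≥0) * ((C₀ * D * K') * ((n:ℝ≥0)+1)^(B'+1) * ρx^n) := by
              rw [nsmul_eq_mul]
      calc ∑ t ∈ Finset.range (n+1), ∑ y ∈ T, ((pre w S t v y : ℕ):ℝ≥0) *
          ((walkCountIn w (↑T ∪ Sᶜ) (n - t) y s' : ℕ):ℝ≥0)
          ≤ (Finset.range (n+1)).card •
            ((T.card : ℝ≥0) * ((C₀ * D * K') * ((n:ℝ≥0)+1)^(B'+1) * ρx^n)) :=
            Finset.sum_le_card_nsmul _ _ _ hterm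
        _ = ((n:ℝ≥0)+1) * ((T.card : ℝ≥0) * ((C₀ * D * K') * ((n:ℝ≥0)+1)^(B'+1) * ρx^n)) := by
            rw [Finset.card_range, nsmul_eq_mul]
            push_cast
            ring
        _ ≤ ((n:ℝ≥0)+1) * (((T.card : ℝ≥0)+1) * ((C₀ * D * K') * ((n:ℝ≥0)+1)^(B'+1) * ρx^n)) := by
            gcongr
            simp
        _ = (C₀ * D * K') * ((T.card:ℝ≥0)+1) * (((n:ℝ≥0)+1)^(B'+1) * ((n:ℝ≥0)+1)) * ρx^n := by
            ring
        _ = (C₀ * D * K') * ((T.card:ℝ≥0)+1) * ((n:ℝ≥0)+1)^(B'+2) * ρx^n := by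
            rw [pow_succ, pow_succ]
            ring

open scoped NNReal ENNReal
open Filter

lemma wc_le_pt (hfin : ∀ u : V, {v | w u v ≠ 0}.Finite) (n : ℕ) (i k : V) :
    walkCount w n i k ≤ pt w n i :=
  single_le_finsum k (suppWC hfin n i) (fun _ => Nat.zero_le _)

lemma tl_supp (hfin : ∀ u : V, {v | w u v ≠ 0}.Finite) (r : ℕ) (s' : V) :
    {k | tl w S r s' k ≠ 0}.Finite := by
  cases r with
  | zero =>
      refine Set.Finite.subset (Set.finite_singleton s') ?_
      intro k hk
      simp only [Set.mem_setOf_eq, tl_zero] at hk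
      by_cases h : s' = k
      · exact Set.mem_singleton_iff.mpr h.symm
      · exact absurd (if_neg (fun hc => h hc.1)) hk
  | succ r =>
      refine Set.Finite.subset
        (Set.Finite.biUnion (hfin s') (fun u _ => suppWI (C := Sᶜ) hfin r u)) ?_
      intro k hk
      simp only [Set.mem_setOf_eq, tl_succ] at hk
      split_ifs at hk with h
      · obtain ⟨u, hu⟩ := finsum_ne_zero_exists hk
        simp only [Set.mem_iUnion, Set.mem_setOf_eq]
        exact ⟨u, fun h0 => hu (by simp [h0]), fun h0 => hu (by simp [h0])⟩
      · exact absurd rfl hk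

lemma pt_le (hfin : ∀ u : V, {v | w u v ≠ 0}.Finite) (hS : S.Finite)
    (hout : ∀ u ∉ S, ∃ v₀, w u v₀ ≤ 1 ∧ ∀ v, v ≠ v₀ → w u v = 0)
    (m : ℕ) (i : V) :
    pt w m i ≤ 1 + ∑ t ∈ Finset.range (m+1), ∑ s' ∈ hS.toFinset,
      walkCount w t i s' * max 1 (degS w s') := by
  classical
  set F := (suppWC hfin m i).toFinset with hF
  have h1 : pt w m i = ∑ k ∈ F, walkCount w m i k :=
    finsum_eq_finset_sum_of_support_subset _ (by
      intro k hk
      simp only [hF, Set.Finite.coe_toFinset]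
      exact hk)
  rw [h1, Finset.sum_congr rfl (fun k _ => lastVisit hfin hS m i k), Finset.sum_add_distrib]
  have h2 : ∑ k ∈ F, walkCountIn w Sᶜ m i k ≤ 1 :=
    le_trans (finsetSum_le_finsum (suppWI hfin m i) F) (qtSc_le_one hfin hout m i)
  have h3 : ∑ k ∈ F, ∑ t ∈ Finset.range (m+1), ∑ s' ∈ hS.toFinset,
      walkCount w t i s' * tl w S (m-t) s' k
      = ∑ t ∈ Finset.range (m+1), ∑ s' ∈ hS.toFinset,
        walkCount w t i s' * ∑ k ∈ F, tl w S (m-t) s' k := by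
    rw [Finset.sum_comm]
    refine Finset.sum_congr rfl fun t _ => ?_
    rw [Finset.sum_comm]
    exact Finset.sum_congr rfl fun s' _ => (Finset.mul_sum _ _ _).symm
  rw [h3]
  refine Nat.add_le_add h2 ?_
  refine Finset.sum_le_sum fun t _ => Finset.sum_le_sum fun s' _ => ?_
  refine Nat.mul_le_mul_left _ ?_
  exact le_trans (finsetSum_le_finsum (tl_supp hfin (m-t) s') F) (tl_total hfin hout (m-t) s')

lemma pt_le_pow (hfin : ∀ u : V, {v | w u v ≠ 0}.Finite)
    {Dm : ℝ≥0} (hDm : ∀ i : V, ((degS w i : ℕ) : ℝ≥0) ≤ Dm) (hDm1 : 1 ≤ Dm) :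
    ∀ (n : ℕ) (i : V), ((pt w n i : ℕ) : ℝ≥0) ≤ Dm ^ n
  | 0, i => by rw [pt_zero]; simp
  | n + 1, i => by
      rw [pt_succ hfin n i, Nat.cast_sum]
      simp only [Nat.cast_mul]
      calc ∑ v ∈ (hfin i).toFinset, ((w i v : ℕ):ℝ≥0) * ((pt w n v : ℕ):ℝ≥0)
          ≤ ∑ v ∈ (hfin i).toFinset, ((w i v : ℕ):ℝ≥0) * Dm ^ n :=
            Finset.sum_le_sum fun v _ => mul_le_mul_right (pt_le_pow hfin hDm hDm1 n v) _
        _ = (∑ v ∈ (hfin i).toFinset, ((w i v : ℕ):ℝ≥0)) * Dm ^ n := by rw [Finset.sum_mul]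
        _ ≤ Dm * Dm ^ n := by
            refine mul_le_mul_left ?_ _
            have : (∑ v ∈ (hfin i).toFinset, ((w i v : ℕ):ℝ≥0)) = ((degS w i : ℕ) : ℝ≥0) := by
              rw [degS_eq hfin i]
              push_cast
              rfl
            rw [this]
            exact hDm i
        _ = Dm ^ (n+1) := by rw [pow_succ]; ring

-- analytic lemmas

lemma GR {a : ℕ → ℕ} {K x : ℝ≥0} {B : ℕ} (hx : 1 ≤ x)
    (h : ∀ n : ℕ, 1 ≤ n → ((a n : ℕ):ℝ≥0) ≤ K * ((n:ℝ≥0)+1)^B * x^n) :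
    Filter.limsup (fun n : ℕ => ((a n : ℕ) : ℝ≥0∞) ^ (1/(n:ℝ))) Filter.atTop ≤ (x : ℝ≥0∞) := by
  by_contra hlt
  push_neg at hlt
  obtain ⟨y, hy1, hy2⟩ := exists_between hlt
  have hytop : y ≠ ⊤ := (lt_of_lt_of_le hy2 le_top).ne
  set y' := y.toNNReal with hy'
  have hyy : y = (y' : ℝ≥0∞) := (ENNReal.coe_toNNReal hytop).symm
  have hxy : x < y' := by
    rw [hyy] at hy1
    exact_mod_cast hy1
  have hy'pos : 0 < (y' : ℝ) := lt_of_lt_of_le one_pos (by exact_mod_cast (hx.trans hxy.le))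
  set r : ℝ := (x : ℝ) / (y' : ℝ) with hr
  have hr0 : 0 ≤ r := div_nonneg (by positivity) hy'pos.le
  have hr1 : r < 1 := by
    rw [hr, div_lt_one hy'pos]
    exact_mod_cast hxy
  have habs : |r| < 1 := by rwa [abs_of_nonneg hr0]
  have htend0 : Tendsto (fun n : ℕ => (2:ℝ)^B * ((n:ℝ)^B * r^n)) atTop (nhds 0) := by
    have := (tendsto_pow_const_mul_const_pow_of_abs_lt_one B habs).const_mul ((2:ℝ)^B)
    simpa using this
  have hsq : Tendsto (fun n : ℕ => ((n:ℝ)+1)^B * r^n) atTop (nhds 0) := by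
    refine squeeze_zero' ?_ ?_ htend0
    · filter_upwards with n
      positivity
    · filter_upwards [eventually_ge_atTop 1] with n hn
      have h1 : ((n:ℝ)+1)^B ≤ (2:ℝ)^B * (n:ℝ)^B := by
        rw [← mul_pow]
        refine pow_le_pow_left₀ (by positivity) ?_ B
        have : (1:ℝ) ≤ (n:ℝ) := by exact_mod_cast hn
        linarith
      calc ((n:ℝ)+1)^B * r^n ≤ ((2:ℝ)^B * (n:ℝ)^B) * r^n := by
            refine mul_le_mul_of_nonneg_right h1 (by positivity)
        _ = (2:ℝ)^B * ((n:ℝ)^B * r^n) := by ring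
  have htendK : Tendsto (fun n : ℕ => (K:ℝ) * (((n:ℝ)+1)^B * r^n)) atTop (nhds 0) := by
    have := hsq.const_mul (K:ℝ)
    simpa using this
  have hev : ∀ᶠ n : ℕ in atTop, (K:ℝ) * (((n:ℝ)+1)^B * r^n) < 1 :=
    htendK.eventually_lt_const one_pos
  have hev2 : ∀ᶠ n : ℕ in atTop,
      ((a n : ℕ) : ℝ≥0∞) ^ (1/(n:ℝ)) ≤ (y' : ℝ≥0∞) := by
    filter_upwards [hev, eventually_ge_atTop 1] with n hn hn1
    have hbound : ((a n : ℕ):ℝ≥0) ≤ y'^n := by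
      rw [← NNReal.coe_le_coe]
      have h2 : ((a n : ℕ):ℝ) ≤ (K:ℝ) * ((n:ℝ)+1)^B * (x:ℝ)^n := by
        exact_mod_cast h n hn1
      have h3 : (K:ℝ) * ((n:ℝ)+1)^B * (x:ℝ)^n ≤ (y':ℝ)^n := by
        have h4 : (x:ℝ)^n = r^n * (y':ℝ)^n := by
          rw [hr, div_pow]
          field_simp
        rw [h4]
        calc (K:ℝ) * ((n:ℝ)+1)^B * (r^n * (y':ℝ)^n)
            = ((K:ℝ) * (((n:ℝ)+1)^B * r^n)) * (y':ℝ)^n := by ring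
          _ ≤ 1 * (y':ℝ)^n := by
              refine mul_le_mul_of_nonneg_right hn.le (by positivity)
          _ = (y':ℝ)^n := one_mul _
      calc ((a n : ℕ):ℝ) ≤ (K:ℝ) * ((n:ℝ)+1)^B * (x:ℝ)^n := h2
        _ ≤ (y':ℝ)^n := h3
        _ = ((y'^n : ℝ≥0) : ℝ) := by push_cast; ring
    have hcast : ((a n : ℕ) : ℝ≥0∞) ≤ ((y' : ℝ≥0∞))^(n:ℝ) := by
      calc ((a n : ℕ) : ℝ≥0∞) = (((a n : ℕ):ℝ≥0) : ℝ≥0∞) := by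
            push_cast; rfl
        _ ≤ ((y'^n : ℝ≥0) : ℝ≥0∞) := ENNReal.coe_le_coe.mpr hbound
        _ = ((y' : ℝ≥0∞))^n := by push_cast; rfl
        _ = ((y' : ℝ≥0∞))^(n:ℝ) := (ENNReal.rpow_natCast _ n).symm
    have hn0 : (n:ℝ) ≠ 0 := by positivity
    calc ((a n : ℕ) : ℝ≥0∞) ^ (1/(n:ℝ))
        ≤ (((y' : ℝ≥0∞))^(n:ℝ)) ^ (1/(n:ℝ)) :=
          ENNReal.rpow_le_rpow hcast (by positivity)
      _ = (y' : ℝ≥0∞) ^ ((n:ℝ) * (1/(n:ℝ))) := by rw [← ENNReal.rpow_mul]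
      _ = (y' : ℝ≥0∞) := by
          rw [mul_one_div, div_self hn0, ENNReal.rpow_one]
  have : Filter.limsup (fun n : ℕ => ((a n : ℕ) : ℝ≥0∞) ^ (1/(n:ℝ))) Filter.atTop
      ≤ (y' : ℝ≥0∞) := limsup_le_of_le (by isBoundedDefault) hev2
  rw [← hyy] at this
  exact absurd (lt_of_lt_of_le hy2 this) (lt_irrefl y)

lemma EXT {a : ℕ → ℕ} {x : ℝ≥0} (hx : 1 ≤ x)
    (h : Filter.limsup (fun n : ℕ => ((a n : ℕ) : ℝ≥0∞) ^ (1/(n:ℝ))) Filter.atTop < (x:ℝ≥0∞)) :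
    ∃ C : ℝ≥0, 1 ≤ C ∧ ∀ n : ℕ, ((a n : ℕ):ℝ≥0) ≤ C * x^n := by
  classical
  have hev := eventually_lt_of_limsup_lt h
  obtain ⟨N, hN⟩ := eventually_atTop.mp hev
  set N' := max N 1 with hN'
  have hbig : ∀ n : ℕ, N' ≤ n → ((a n : ℕ):ℝ≥0) ≤ x^n := by
    intro n hn
    have h1 : ((a n : ℕ) : ℝ≥0∞) ^ (1/(n:ℝ)) < (x:ℝ≥0∞) := hN n (le_trans (le_max_left _ _) hn)
    have hn1 : (1:ℕ) ≤ n := le_trans (le_max_right _ _) hn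
    have hn0 : (n:ℝ) ≠ 0 := by positivity
    have h2 : (((a n : ℕ) : ℝ≥0∞) ^ (1/(n:ℝ)))^(n:ℝ) ≤ ((x:ℝ≥0∞))^(n:ℝ) :=
      ENNReal.rpow_le_rpow h1.le (by positivity)
    rw [← ENNReal.rpow_mul, one_div, inv_mul_cancel₀ hn0, ENNReal.rpow_one] at h2
    rw [ENNReal.rpow_natCast] at h2
    have h3 : ((a n : ℕ) : ℝ≥0∞) ≤ ((x^n : ℝ≥0) : ℝ≥0∞) := by
      calc ((a n : ℕ) : ℝ≥0∞) ≤ ((x:ℝ≥0∞))^n := h2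
        _ = ((x^n : ℝ≥0) : ℝ≥0∞) := by push_cast; rfl
    have h4 : (((a n : ℕ):ℝ≥0) : ℝ≥0∞) ≤ ((x^n : ℝ≥0) : ℝ≥0∞) := by
      calc (((a n : ℕ):ℝ≥0) : ℝ≥0∞) = ((a n : ℕ) : ℝ≥0∞) := by push_cast; rfl
        _ ≤ ((x^n : ℝ≥0) : ℝ≥0∞) := h3
    exact_mod_cast h4
  refine ⟨max 1 ((Finset.range N').sup (fun n => ((a n : ℕ):ℝ≥0))), le_max_left _ _, ?_⟩
  intro n
  by_cases hn : N' ≤ n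
  · calc ((a n : ℕ):ℝ≥0) ≤ x^n := hbig n hn
      _ = 1 * x^n := (one_mul _).symm
      _ ≤ max 1 ((Finset.range N').sup (fun n => ((a n : ℕ):ℝ≥0))) * x^n :=
        mul_le_mul_left (le_max_left _ _) _
  · push_neg at hn
    have h1 : ((a n : ℕ):ℝ≥0) ≤ (Finset.range N').sup (fun n => ((a n : ℕ):ℝ≥0)) :=
      Finset.le_sup (f := fun m : ℕ => ((a m : ℕ):ℝ≥0)) (Finset.mem_range.mpr hn)
    calc ((a n : ℕ):ℝ≥0) ≤ max 1 ((Finset.range N').sup (fun n => ((a n : ℕ):ℝ≥0))) :=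
          le_trans h1 (le_max_right _ _)
      _ = max 1 ((Finset.range N').sup (fun n => ((a n : ℕ):ℝ≥0))) * 1 := (mul_one _).symm
      _ ≤ max 1 ((Finset.range N').sup (fun n => ((a n : ℕ):ℝ≥0))) * x^n := by
          refine mul_le_mul_right ?_ _
          calc (1:ℝ≥0) = 1^n := (one_pow n).symm
            _ ≤ x^n := pow_le_pow_left₀ (by positivity) hx n
  
lemma GE1 {a : ℕ → ℕ} (h : ∀ N : ℕ, ∃ n, N ≤ n ∧ 1 ≤ a n) :
    1 ≤ Filter.limsup (fun n : ℕ => ((a n : ℕ) : ℝ≥0∞) ^ (1/(n:ℝ))) Filter.atTop := by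
  refine le_limsup_of_frequently_le ?_ (by isBoundedDefault)
  rw [frequently_atTop]
  intro N
  obtain ⟨n, hn, ha⟩ := h N
  refine ⟨n, hn, ?_⟩
  have h1 : (1:ℝ≥0∞) ≤ ((a n : ℕ) : ℝ≥0∞) := by exact_mod_cast ha
  calc (1:ℝ≥0∞) = (1:ℝ≥0∞) ^ (1/(n:ℝ)) := (ENNReal.one_rpow _).symm
    _ ≤ ((a n : ℕ) : ℝ≥0∞) ^ (1/(n:ℝ)) := ENNReal.rpow_le_rpow h1 (by positivity)

end CG


/-- For a directed multigraph with finite out-degrees admitting a finite subset `S` such that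
every vertex outside `S` has out-degree and in-degree at most one, every closed directed walk
of positive length passes through `S`, and some closed directed walk of positive length exists:
the number `c(n)` of based closed directed walks of length `n ≥ 1` is finite, the number
`p(i,n)` of directed walks of length `n` starting at any vertex `i` is finite, the exponential
growth rate of `c(n)` equals the supremum over vertices `i` of the exponential growth rate of
`p(i,n)`, and this supremum is attained at some vertex of `S`. -/
theorem cycle_growth_eq_sup_path_growth {V : Type*} (w : V → V → ℕ)
    (hfin : ∀ u : V, {v | w u v ≠ 0}.Finite)
    (S : Set V) (hS : S.Finite)
    (hdeg : ∀ u ∉ S,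
      (∃ v₀, w u v₀ ≤ 1 ∧ ∀ v, v ≠ v₀ → w u v = 0) ∧
      (∃ x₀, w x₀ u ≤ 1 ∧ ∀ x, x ≠ x₀ → w x u = 0))
    (hthrough : ∀ n, 1 ≤ n → ∀ i, walkCountIn w Sᶜ n i i = 0)
    (hexists : ∃ n, 1 ≤ n ∧ ∃ i, walkCount w n i i ≠ 0) :
    (∀ n, 1 ≤ n → {i | walkCount w n i i ≠ 0}.Finite) ∧
    (∀ (i : V) (n : ℕ), {k | walkCount w n i k ≠ 0}.Finite) ∧
    Filter.limsup
        (fun n : ℕ => ((∑ᶠ i, walkCount w n i i : ℕ) : ℝ≥0∞) ^ (1 / (n : ℝ)))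
        Filter.atTop =
      (⨆ i : V, Filter.limsup
        (fun n : ℕ => ((∑ᶠ k, walkCount w n i k : ℕ) : ℝ≥0∞) ^ (1 / (n : ℝ)))
        Filter.atTop) ∧
    ∃ i₀ ∈ S, Filter.limsup
        (fun n : ℕ => ((∑ᶠ k, walkCount w n i₀ k : ℕ) : ℝ≥0∞) ^ (1 / (n : ℝ)))
        Filter.atTop =
      (⨆ i : V, Filter.limsup
        (fun n : ℕ => ((∑ᶠ k, walkCount w n i k : ℕ) : ℝ≥0∞) ^ (1 / (n : ℝ)))
        Filter.atTop) := by
  classical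
  have hout : ∀ u ∉ S, ∃ v₀, w u v₀ ≤ 1 ∧ ∀ v, v ≠ v₀ → w u v = 0 := fun u hu => (hdeg u hu).1
  set ρ : ℝ≥0∞ := Filter.limsup
      (fun n : ℕ => ((∑ᶠ i, walkCount w n i i : ℕ) : ℝ≥0∞) ^ (1 / (n : ℝ)))
      Filter.atTop with hρdef
  set π : V → ℝ≥0∞ := fun i => Filter.limsup
      (fun n : ℕ => ((∑ᶠ k, walkCount w n i k : ℕ) : ℝ≥0∞) ^ (1 / (n : ℝ)))
      Filter.atTop with hπdef
  obtain ⟨s₀, hs₀S, m₀, hm₀, hwcm⟩ := CG.exists_S_cycle hfin hS hthrough hexists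
  set Sfin := hS.toFinset with hSfin
  have hs₀fin : s₀ ∈ Sfin := hS.mem_toFinset.mpr hs₀S
  set Dm : ℝ≥0 := max 1 (Sfin.sup (fun s => ((CG.degS w s : ℕ) : ℝ≥0))) with hDmdef
  have hDm1 : 1 ≤ Dm := le_max_left _ _
  have hDS : ∀ s ∈ S, ((CG.degS w s : ℕ) : ℝ≥0) ≤ Dm := fun s hs =>
    le_max_of_le_right (Finset.le_sup (f := fun s => ((CG.degS w s : ℕ):ℝ≥0))
      (hS.mem_toFinset.mpr hs))
  have hDmAll : ∀ i : V, ((CG.degS w i : ℕ) : ℝ≥0) ≤ Dm := by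
    intro i
    by_cases hi : i ∈ S
    · exact hDS i hi
    · refine le_trans ?_ hDm1
      exact_mod_cast CG.degS_le_one hout hi
  have hptD : ∀ (n : ℕ) (i : V), ((CG.pt w n i : ℕ):ℝ≥0) ≤ Dm ^ n :=
    CG.pt_le_pow hfin hDmAll hDm1
  have hπD : ∀ i : V, π i ≤ (Dm : ℝ≥0∞) := by
    intro i
    refine CG.GR (a := fun n => ∑ᶠ k, walkCount w n i k) (K := 1) (B := 0) hDm1 ?_
    intro n _
    have h1 : ((∑ᶠ k, walkCount w n i k : ℕ):ℝ≥0) ≤ Dm^n := hptD n i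
    calc ((∑ᶠ k, walkCount w n i k : ℕ):ℝ≥0) ≤ Dm^n := h1
      _ = 1 * ((n:ℝ≥0)+1)^0 * Dm^n := by ring
  have hmul_ge : ∀ N : ℕ, N ≤ N * m₀ + m₀ := by
    intro N
    calc N = N * 1 := (Nat.mul_one N).symm
      _ ≤ N * m₀ := Nat.mul_le_mul_left N hm₀
      _ ≤ N * m₀ + m₀ := Nat.le_add_right _ _
  have hmul_one : ∀ N : ℕ, 1 ≤ N * m₀ + m₀ := by
    intro N
    have : m₀ ≤ N * m₀ + m₀ := Nat.le_add_left _ _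
    omega
  have hρ1 : 1 ≤ ρ := by
    refine CG.GE1 (a := fun n => ∑ᶠ i, walkCount w n i i) ?_
    intro N
    refine ⟨N * m₀ + m₀, hmul_ge N, ?_⟩
    have h1 : 1 ≤ walkCount w (N*m₀+m₀) s₀ s₀ := CG.one_le_wc_mul hfin hwcm N
    have h2 : walkCount w (N*m₀+m₀) s₀ s₀ ≤ ∑ᶠ i, walkCount w (N*m₀+m₀) i i :=
      CG.wc_le_cc hfin hS hthrough (hmul_one N) s₀
    exact le_trans h1 h2
  have hπs₀1 : 1 ≤ π s₀ := by
    refine CG.GE1 (a := fun n => ∑ᶠ k, walkCount w n s₀ k) ?_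
    intro N
    refine ⟨N * m₀ + m₀, hmul_ge N, ?_⟩
    have h1 : 1 ≤ walkCount w (N*m₀+m₀) s₀ s₀ := CG.one_le_wc_mul hfin hwcm N
    have h2 : walkCount w (N*m₀+m₀) s₀ s₀ ≤ CG.pt w (N*m₀+m₀) s₀ :=
      CG.wc_le_pt hfin (N*m₀+m₀) s₀ s₀
    have h3 : CG.pt w (N*m₀+m₀) s₀ = ∑ᶠ k, walkCount w (N*m₀+m₀) s₀ k := rfl
    rw [h3] at h2
    exact le_trans h1 h2
  have honele : ∀ (q : ℕ) (y : ℝ≥0), 1 ≤ y → (1:ℝ≥0) ≤ y^q := by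
    intro q y hy
    calc (1:ℝ≥0) = 1^q := (one_pow q).symm
      _ ≤ y^q := pow_le_pow_left₀ (by positivity) hy q
  have hnone : ∀ (q b : ℕ), (1:ℝ≥0) ≤ ((q:ℝ≥0)+1)^b := by
    intro q b
    exact honele b _ (by simp)
  have hcsD : ∀ n : ℕ, 1 ≤ n → ((∑ᶠ i, walkCount w n i i : ℕ):ℝ≥0) ≤
      ((Sfin.card:ℝ≥0)+1) * ((n:ℝ≥0)+1)^1 * Dm^n := by
    intro n hn
    have h1 := CG.cc_le hfin hS hthrough hout hn
    calc ((∑ᶠ i, walkCount w n i i : ℕ):ℝ≥0)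
        ≤ ((∑ t ∈ Finset.range (n+1), ∑ x ∈ Sfin, CG.pt w (n-t) x : ℕ):ℝ≥0) :=
          Nat.cast_le.mpr h1
      _ = ∑ t ∈ Finset.range (n+1), ∑ x ∈ Sfin, ((CG.pt w (n-t) x : ℕ):ℝ≥0) := by
          push_cast; rfl
      _ ≤ ∑ t ∈ Finset.range (n+1), ∑ x ∈ Sfin, Dm^n := by
          refine Finset.sum_le_sum fun t _ => Finset.sum_le_sum fun x _ => ?_
          calc ((CG.pt w (n-t) x : ℕ):ℝ≥0) ≤ Dm^(n-t) := hptD (n-t) x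
            _ ≤ Dm^n := pow_le_pow_right₀ hDm1 (Nat.sub_le n t)
      _ = ((n:ℝ≥0)+1) * ((Sfin.card:ℝ≥0) * Dm^n) := by
          rw [Finset.sum_const, Finset.sum_const, Finset.card_range, nsmul_eq_mul, nsmul_eq_mul]
          push_cast; ring
      _ = (Sfin.card:ℝ≥0) * ((n:ℝ≥0)+1) * Dm^n := by ring
      _ ≤ ((Sfin.card:ℝ≥0)+1) * ((n:ℝ≥0)+1)^1 * Dm^n := by
          rw [pow_one]
          exact mul_le_mul_left (mul_le_mul_left
            (le_add_of_nonneg_right zero_le_one) _) _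
  have hρD : ρ ≤ (Dm:ℝ≥0∞) := CG.GR hDm1 hcsD
  -- (L) : every π i is at most ρ
  have hL : ∀ i : V, π i ≤ ρ := by
    intro i
    by_contra hc
    push_neg at hc
    obtain ⟨xe, hx1e, hx2e⟩ := exists_between hc
    have hxtop : xe ≠ ⊤ := ((lt_of_lt_of_le hx2e (hπD i)).trans ENNReal.coe_lt_top).ne
    set x' := xe.toNNReal with hx'def
    have hxe : xe = (x':ℝ≥0∞) := (ENNReal.coe_toNNReal hxtop).symm
    have hx'1 : 1 ≤ x' := by
      have h1 : (1:ℝ≥0∞) ≤ xe := le_of_lt (lt_of_le_of_lt hρ1 hx1e)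
      rw [hxe] at h1
      exact_mod_cast h1
    have hρx : ρ < (x':ℝ≥0∞) := hxe ▸ hx1e
    obtain ⟨C, hC1, hCb⟩ := CG.EXT (a := fun n => ∑ᶠ i, walkCount w n i i) hx'1 hρx
    have hcb : ∀ (β : ℕ) (s : V), ((walkCount w β s s : ℕ):ℝ≥0) ≤ C * x'^β := by
      intro β s
      cases β with
      | zero =>
          rw [CG.wc_zero, if_pos rfl]
          calc ((1:ℕ):ℝ≥0) = 1 := by norm_num
            _ ≤ C := hC1
            _ = C * x'^0 := by rw [pow_zero, mul_one]
      | succ β' =>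
          have h1 : walkCount w (β'+1) s s ≤ ∑ᶠ i, walkCount w (β'+1) i i :=
            CG.wc_le_cc hfin hS hthrough (Nat.succ_le_succ (Nat.zero_le _)) s
          calc ((walkCount w (β'+1) s s:ℕ):ℝ≥0)
              ≤ ((∑ᶠ i, walkCount w (β'+1) i i : ℕ):ℝ≥0) := Nat.cast_le.mpr h1
            _ ≤ C * x'^(β'+1) := hCb (β'+1)
    obtain ⟨K₂, B₂, hK₂1, hEb⟩ := CG.Ebound hfin hout hx'1 hC1 hDm1 hDS hcb
      Sfin.card Sfin (le_refl _) (by rw [hSfin, hS.coe_toFinset])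
    have huniv : ((↑Sfin ∪ Sᶜ : Set V)) = Set.univ := by
      rw [hSfin, hS.coe_toFinset, Set.union_compl_self]
    have hwcb : ∀ (t:ℕ) (v s' : V), s' ∈ Sfin →
        ((walkCount w t v s' :ℕ):ℝ≥0) ≤ K₂*((t:ℝ≥0)+1)^B₂*x'^t := by
      intro t v s' hs'
      have h1 : walkCount w t v s' = walkCountIn w (↑Sfin ∪ Sᶜ) t v s' := by
        rw [huniv, CG.wi_univ]
      rw [h1]
      exact hEb t v s' hs'
    have hptb : ∀ (m:ℕ), 1 ≤ m → ∀ (i:V), ((∑ᶠ k, walkCount w m i k : ℕ):ℝ≥0)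
        ≤ (1 + ((Sfin.card:ℝ≥0)+1)*K₂*Dm) * ((m:ℝ≥0)+1)^(B₂+2) * x'^m := by
      intro m _ i
      have h1 := CG.pt_le hfin hS hout m i
      have h2 : ((CG.pt w m i : ℕ):ℝ≥0) ≤ 1 + ∑ t ∈ Finset.range (m+1), ∑ s' ∈ Sfin,
          ((walkCount w t i s' : ℕ):ℝ≥0) * ((max 1 (CG.degS w s') : ℕ):ℝ≥0) := by
        calc ((CG.pt w m i : ℕ):ℝ≥0)
            ≤ ((1 + ∑ t ∈ Finset.range (m+1), ∑ s' ∈ Sfin,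
                walkCount w t i s' * max 1 (CG.degS w s') : ℕ):ℝ≥0) := Nat.cast_le.mpr h1
          _ = 1 + ∑ t ∈ Finset.range (m+1), ∑ s' ∈ Sfin,
              ((walkCount w t i s' : ℕ):ℝ≥0) * ((max 1 (CG.degS w s') : ℕ):ℝ≥0) := by
              push_cast; ring
      have h3 : ∀ t ∈ Finset.range (m+1), ∑ s' ∈ Sfin,
          ((walkCount w t i s' : ℕ):ℝ≥0) * ((max 1 (CG.degS w s') : ℕ):ℝ≥0)
          ≤ (Sfin.card:ℝ≥0) * (K₂*((m:ℝ≥0)+1)^B₂*x'^m * Dm) := by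
        intro t ht
        have htm : t ≤ m := by
          simp only [Finset.mem_range] at ht; omega
        have hin : ∀ s' ∈ Sfin, ((walkCount w t i s' : ℕ):ℝ≥0) *
            ((max 1 (CG.degS w s') : ℕ):ℝ≥0) ≤ K₂*((m:ℝ≥0)+1)^B₂*x'^m * Dm := by
          intro s' hs'
          refine mul_le_mul' ?_ ?_
          · calc ((walkCount w t i s' : ℕ):ℝ≥0) ≤ K₂*((t:ℝ≥0)+1)^B₂*x'^t := hwcb t i s' hs'
              _ ≤ K₂*((m:ℝ≥0)+1)^B₂*x'^m := by
                  refine mul_le_mul' (mul_le_mul' (le_refl K₂) ?_) ?_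
                  · refine pow_le_pow_left₀ (by positivity) ?_ B₂
                    have : (t:ℝ≥0) ≤ (m:ℝ≥0) := by exact_mod_cast htm
                    exact add_le_add_left this 1
                  · exact pow_le_pow_right₀ hx'1 htm
          · rw [Nat.cast_max]
            exact max_le (by simpa using hDm1) (hDmAll s')
        calc ∑ s' ∈ Sfin, ((walkCount w t i s' : ℕ):ℝ≥0) * ((max 1 (CG.degS w s') : ℕ):ℝ≥0)
            ≤ Sfin.card • (K₂*((m:ℝ≥0)+1)^B₂*x'^m * Dm) := Finset.sum_le_card_nsmul _ _ _ hin
          _ = (Sfin.card:ℝ≥0) * (K₂*((m:ℝ≥0)+1)^B₂*x'^m * Dm) := by rw [nsmul_eq_mul]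
      have h4 : ∑ t ∈ Finset.range (m+1), ∑ s' ∈ Sfin,
          ((walkCount w t i s' : ℕ):ℝ≥0) * ((max 1 (CG.degS w s') : ℕ):ℝ≥0)
          ≤ ((m:ℝ≥0)+1) * ((Sfin.card:ℝ≥0) * (K₂*((m:ℝ≥0)+1)^B₂*x'^m * Dm)) := by
        calc ∑ t ∈ Finset.range (m+1), ∑ s' ∈ Sfin,
            ((walkCount w t i s' : ℕ):ℝ≥0) * ((max 1 (CG.degS w s') : ℕ):ℝ≥0)
            ≤ (Finset.range (m+1)).card •
              ((Sfin.card:ℝ≥0) * (K₂*((m:ℝ≥0)+1)^B₂*x'^m * Dm)) :=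
              Finset.sum_le_card_nsmul _ _ _ h3
          _ = ((m:ℝ≥0)+1) * ((Sfin.card:ℝ≥0) * (K₂*((m:ℝ≥0)+1)^B₂*x'^m * Dm)) := by
              rw [Finset.card_range, nsmul_eq_mul]; push_cast; ring
      have h6 : ((CG.pt w m i : ℕ):ℝ≥0)
          ≤ (1 + ((Sfin.card:ℝ≥0)+1)*K₂*Dm) * ((m:ℝ≥0)+1)^(B₂+2) * x'^m := by
        have h7 : (1:ℝ≥0) ≤ ((m:ℝ≥0)+1)^(B₂+2) * x'^m :=
          le_trans (le_refl 1) (by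
            calc (1:ℝ≥0) = 1 * 1 := by ring
              _ ≤ ((m:ℝ≥0)+1)^(B₂+2) * x'^m := mul_le_mul' (hnone m _) (honele m x' hx'1))
        calc ((CG.pt w m i : ℕ):ℝ≥0)
            ≤ 1 + ((m:ℝ≥0)+1) * ((Sfin.card:ℝ≥0) * (K₂*((m:ℝ≥0)+1)^B₂*x'^m * Dm)) :=
              le_trans h2 (add_le_add_right h4 1)
          _ = 1 + (Sfin.card:ℝ≥0)*K₂*Dm * (((m:ℝ≥0)+1)^(B₂+1) * x'^m) := by
              rw [pow_succ]; ring
          _ ≤ 1 * (((m:ℝ≥0)+1)^(B₂+2) * x'^m) +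
              ((Sfin.card:ℝ≥0)+1)*K₂*Dm * (((m:ℝ≥0)+1)^(B₂+2) * x'^m) := by
              refine add_le_add ?_ ?_
              · rw [one_mul]; exact h7
              · refine mul_le_mul' ?_ ?_
                · exact mul_le_mul_left (mul_le_mul_left
                    (le_add_of_nonneg_right zero_le_one) _) _
                · refine mul_le_mul_left ?_ _
                  exact pow_le_pow_right₀ (by simp) (Nat.le_succ _)
          _ = (1 + ((Sfin.card:ℝ≥0)+1)*K₂*Dm) * ((m:ℝ≥0)+1)^(B₂+2) * x'^m := by ring
      exact h6
    have hfinal : π i ≤ (x':ℝ≥0∞) :=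
      CG.GR (a := fun n => ∑ᶠ k, walkCount w n i k) hx'1 (fun m hm => hptb m hm i)
    rw [← hxe] at hfinal
    exact absurd (lt_of_lt_of_le hx2e hfinal) (lt_irrefl xe)
  -- (U) : ρ is at most the max of π over S
  obtain ⟨sm, hsmfin, hsmax⟩ := Finset.exists_max_image Sfin (fun s => π s) ⟨s₀, hs₀fin⟩
  have hsmS : sm ∈ S := hS.mem_toFinset.mp hsmfin
  have hπsm1 : 1 ≤ π sm := le_trans hπs₀1 (hsmax s₀ hs₀fin)
  have hU : ρ ≤ π sm := by
    by_contra hc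
    push_neg at hc
    obtain ⟨xe, hx1e, hx2e⟩ := exists_between hc
    have hxtop : xe ≠ ⊤ := ((lt_of_lt_of_le hx2e hρD).trans ENNReal.coe_lt_top).ne
    set x' := xe.toNNReal with hx'def
    have hxe : xe = (x':ℝ≥0∞) := (ENNReal.coe_toNNReal hxtop).symm
    have hx'1 : 1 ≤ x' := by
      have h1 : (1:ℝ≥0∞) ≤ xe := le_of_lt (lt_of_le_of_lt hπsm1 hx1e)
      rw [hxe] at h1
      exact_mod_cast h1
    have hCs : ∀ s : V, ∃ Cs : ℝ≥0, 1 ≤ Cs ∧ (s ∈ Sfin → ∀ n:ℕ,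
        ((∑ᶠ k, walkCount w n s k : ℕ):ℝ≥0) ≤ Cs * x'^n) := by
      intro s
      by_cases hs : s ∈ Sfin
      · have hππ : π s < (x':ℝ≥0∞) := by
          rw [← hxe]
          exact lt_of_le_of_lt (hsmax s hs) hx1e
        obtain ⟨Cs, h1, h2⟩ := CG.EXT (a := fun n => ∑ᶠ k, walkCount w n s k) hx'1 hππ
        exact ⟨Cs, h1, fun _ => h2⟩
      · exact ⟨1, le_refl _, fun h => absurd h hs⟩
    choose Cf hCf1 hCfb using hCs
    set Cm : ℝ≥0 := max 1 (Sfin.sup Cf) with hCmdef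
    have hCm1 : 1 ≤ Cm := le_max_left _ _
    have hCfC : ∀ s ∈ Sfin, Cf s ≤ Cm := fun s h => le_max_of_le_right (Finset.le_sup h)
    have hccb : ∀ n : ℕ, 1 ≤ n → ((∑ᶠ i, walkCount w n i i:ℕ):ℝ≥0)
        ≤ ((Sfin.card:ℝ≥0)+1)*Cm * ((n:ℝ≥0)+1)^1 * x'^n := by
      intro n hn
      have h1 := CG.cc_le hfin hS hthrough hout hn
      calc ((∑ᶠ i, walkCount w n i i : ℕ):ℝ≥0)
          ≤ ((∑ t ∈ Finset.range (n+1), ∑ x ∈ Sfin, CG.pt w (n-t) x : ℕ):ℝ≥0) :=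
            Nat.cast_le.mpr h1
        _ = ∑ t ∈ Finset.range (n+1), ∑ x ∈ Sfin, ((CG.pt w (n-t) x : ℕ):ℝ≥0) := by
            push_cast; rfl
        _ ≤ ∑ t ∈ Finset.range (n+1), ∑ x ∈ Sfin, Cm * x'^n := by
            refine Finset.sum_le_sum fun t _ => Finset.sum_le_sum fun x hx => ?_
            have h2 : CG.pt w (n-t) x = ∑ᶠ k, walkCount w (n-t) x k := rfl
            calc ((CG.pt w (n-t) x : ℕ):ℝ≥0)
                = ((∑ᶠ k, walkCount w (n-t) x k : ℕ):ℝ≥0) := by rw [h2]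
              _ ≤ Cf x * x'^(n-t) := hCfb x hx (n-t)
              _ ≤ Cm * x'^n :=
                  mul_le_mul' (hCfC x hx) (pow_le_pow_right₀ hx'1 (Nat.sub_le n t))
        _ = ((n:ℝ≥0)+1) * ((Sfin.card:ℝ≥0) * (Cm * x'^n)) := by
            rw [Finset.sum_const, Finset.sum_const, Finset.card_range, nsmul_eq_mul,
              nsmul_eq_mul]
            push_cast; ring
        _ = (Sfin.card:ℝ≥0) * Cm * ((n:ℝ≥0)+1) * x'^n := by ring
        _ ≤ ((Sfin.card:ℝ≥0)+1)*Cm * ((n:ℝ≥0)+1)^1 * x'^n := by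
            rw [pow_one]
            refine mul_le_mul_left (mul_le_mul_left ?_ _) _
            exact mul_le_mul_left (le_add_of_nonneg_right zero_le_one) _
    have hfinal : ρ ≤ (x':ℝ≥0∞) := CG.GR hx'1 hccb
    rw [← hxe] at hfinal
    exact absurd (lt_of_lt_of_le hx2e hfinal) (lt_irrefl xe)
  have heq : π sm = ρ := le_antisymm (hL sm) hU
  have hsup : (⨆ i, π i) = ρ := by
    refine le_antisymm (iSup_le hL) ?_
    rw [← heq]
    exact le_iSup (fun i => π i) sm
  refine ⟨fun n hn => CG.suppDiag hfin hS hthrough hn,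
    fun i n => CG.suppWC hfin n i, hsup.symm, sm, hsmS, ?_⟩
  show π sm = ⨆ i, π i
  rw [heq, hsup]
end

section
/- Let V be a type and let w : V → V → ℕ be the edge-multiplicity function of a directed multigraph such that every vertex has finite out-degree (for each u the set {v : w(u,v) ≠ 0} is finite). Suppose there is a finite subset S ⊆ V such that: (i) every vertex not in S has out-degree at most 1 and in-degree at most 1; (ii) every based closed directed walk of positive length passes through a vertex of S; and (iii) there exists at least one based closed directed walk of positive length. Then there exists a finite subset C ⊆ V with the following properties: C is strongly connected in the induced sense (for all i, j ∈ C there is a directed walk from i to j all of whose vertices lie in C), C contains a based closed directed walk of positive length, and limsup_{n→∞} (c(n))^{1/n} = limsup_{n→∞} (c_C(n))^{1/n}, where c(n) is the number of based closed directed walks of length n in the whole graph and c_C(n) is the number of based closed directed walks of length n all of whose vertices lie in C. -/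
open scoped Classical

namespace WalkAux
variable {V : Type*} (w : V → V → ℕ)

lemma wc_zero (i k : V) : walkCount w 0 i k = if i = k then 1 else 0 := rfl

lemma wc_succ (n : ℕ) (i k : V) :
    walkCount w (n + 1) i k = ∑ᶠ v, w i v * walkCount w n v k := rfl

variable {w}

lemma exists_ne_zero_of_finsum_ne_zero {α : Type*} {f : α → ℕ} (h : ∑ᶠ x, f x ≠ 0) :
    ∃ x, f x ≠ 0 := by
  by_contra hc
  push_neg at hc
  exact h (finsum_eq_zero_of_forall_eq_zero hc)

variable (hfin : ∀ u : V, {v | w u v ≠ 0}.Finite)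
include hfin

lemma supp_fin (n : ℕ) (i : V) : {k | walkCount w n i k ≠ 0}.Finite := by
  induction n generalizing i with
  | zero =>
    apply Set.Finite.subset (Set.finite_singleton i)
    intro k hk
    simp only [wc_zero, ne_eq, ite_eq_right_iff, Set.mem_setOf_eq] at hk
    rcases eq_or_ne i k with h | h
    · simp [h]
    · simp [h] at hk
  | succ n ih =>
    apply Set.Finite.subset ((hfin i).biUnion (fun v _ => ih v))
    intro k hk
    simp only [wc_succ, Set.mem_setOf_eq] at hk
    obtain ⟨v, hv⟩ := exists_ne_zero_of_finsum_ne_zero hk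
    rcases mul_ne_zero_iff.mp hv with ⟨h1, h2⟩
    exact Set.mem_biUnion h1 h2

lemma term_le_succ (n : ℕ) (i v k : V) :
    w i v * walkCount w n v k ≤ walkCount w (n + 1) i k := by
  rw [wc_succ]
  refine single_le_finsum (f := fun v => w i v * walkCount w n v k) v ?_ (fun j => Nat.zero_le _)
  refine (hfin i).subset (fun x hx => ?_)
  simp only [Function.mem_support] at hx
  intro hw
  exact hx (by simp [hw])

omit hfin in
lemma wc_one (i k : V) : walkCount w 1 i k = w i k := by
  rw [wc_succ]
  rw [finsum_eq_single _ k (fun x hx => by simp [wc_zero, fun h : x = k => hx h])]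
  simp [wc_zero]


lemma term_supp_fin (n : ℕ) (i k : V) :
    (Function.support fun v => w i v * walkCount w n v k).Finite := by
  refine (hfin i).subset (fun x hx => ?_)
  simp only [Function.mem_support] at hx
  intro hw
  exact hx (by simp [hw])

lemma chapman (m n : ℕ) (i k : V) :
    walkCount w (m + n) i k = ∑ᶠ j, walkCount w m i j * walkCount w n j k := by
  induction m generalizing i with
  | zero =>
    rw [finsum_eq_single _ i (fun x hx => by rw [wc_zero, if_neg (fun h => hx h.symm), zero_mul])]
    simp [wc_zero]
  | succ m ih =>
    have hrec : m + 1 + n = (m + n) + 1 := by omega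
    rw [hrec, wc_succ]
    set A := (hfin i).toFinset with hA
    have hsub : ∀ k', (Function.support fun v => w i v * walkCount w (m + n) v k') ⊆ ↑A := by
      intro k' x hx
      simp only [Function.mem_support] at hx
      simp only [hA, Set.Finite.coe_toFinset, Set.mem_setOf_eq]
      intro hw
      exact hx (by simp [hw])
    rw [finsum_eq_finset_sum_of_support_subset _ (hsub k)]
    have step : ∀ v ∈ A, w i v * walkCount w (m + n) v k
        = ∑ᶠ j, w i v * (walkCount w m v j * walkCount w n j k) := by
      intro v _
      rw [ih v, mul_finsum' _ _ ?hf]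
      case hf =>
        refine ((supp_fin hfin m v).subset ?_)
        intro x hx
        simp only [Function.mem_support] at hx
        simp only [Set.mem_setOf_eq]
        intro hz
        exact hx (by simp [hz])
    rw [Finset.sum_congr rfl step, sum_finsum_comm _ _ ?hfin2]
    case hfin2 =>
      intro v _
      refine ((supp_fin hfin m v).subset ?_)
      intro x hx
      simp only [Function.mem_support] at hx
      simp only [Set.mem_setOf_eq]
      intro hz
      exact hx (by simp [hz])
    refine finsum_congr (fun j => ?_)
    rw [wc_succ]
    rw [finsum_eq_finset_sum_of_support_subset _ (s := A) ?hsub3, Finset.sum_mul]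
    case hsub3 =>
      intro x hx
      simp only [Function.mem_support] at hx
      simp only [hA, Set.Finite.coe_toFinset, Set.mem_setOf_eq]
      intro hw
      exact hx (by simp [hw])
    refine Finset.sum_congr rfl (fun v _ => by ring)

lemma mul_le_chapman (m n : ℕ) (i j k : V) :
    walkCount w m i j * walkCount w n j k ≤ walkCount w (m + n) i k := by
  rw [chapman hfin m n i k]
  refine single_le_finsum (f := fun j => walkCount w m i j * walkCount w n j k) j
    ?_ (fun x => Nat.zero_le _)
  refine (supp_fin hfin m i).subset (fun x hx => ?_)
  simp only [Function.mem_support] at hx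
  simp only [Set.mem_setOf_eq]
  intro hz
  exact hx (by simp [hz])

lemma chapman_exists {m n : ℕ} {i k : V} (h : walkCount w (m + n) i k ≠ 0) :
    ∃ j, walkCount w m i j ≠ 0 ∧ walkCount w n j k ≠ 0 := by
  rw [chapman hfin m n i k] at h
  obtain ⟨j, hj⟩ := exists_ne_zero_of_finsum_ne_zero h
  exact ⟨j, mul_ne_zero_iff.mp hj⟩

omit hfin in
lemma wc_succ_exists {n : ℕ} {i k : V} (h : walkCount w (n + 1) i k ≠ 0) :
    ∃ v, w i v ≠ 0 ∧ walkCount w n v k ≠ 0 := by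
  rw [wc_succ] at h
  obtain ⟨v, hv⟩ := exists_ne_zero_of_finsum_ne_zero h
  exact ⟨v, mul_ne_zero_iff.mp hv⟩

omit hfin in
lemma uniq_fwd (H : ∀ a b b', w a b ≠ 0 → w a b' ≠ 0 → b = b') :
    ∀ {m : ℕ} {v u u' : V}, walkCount w m v u ≠ 0 → walkCount w m v u' ≠ 0 → u = u' := by
  intro m
  induction m with
  | zero =>
    intro v u u' h h'
    simp only [wc_zero, ne_eq, ite_eq_right_iff, not_forall] at h h'
    exact h.1 ▸ h'.1 ▸ rfl
  | succ m ih =>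
    intro v u u' h h'
    obtain ⟨x, hx, hxu⟩ := wc_succ_exists h
    obtain ⟨x', hx', hxu'⟩ := wc_succ_exists h'
    exact ih (H v x x' hx hx' ▸ hxu) hxu'

lemma uniq_bwd (H : ∀ b a a', w a b ≠ 0 → w a' b ≠ 0 → a = a') :
    ∀ {m : ℕ} {j u u' : V}, walkCount w m u j ≠ 0 → walkCount w m u' j ≠ 0 → u = u' := by
  intro m
  induction m with
  | zero =>
    intro j u u' h h'
    simp only [wc_zero, ne_eq, ite_eq_right_iff, not_forall] at h h'
    exact h.1.trans h'.1.symm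
  | succ m ih =>
    intro j u u' h h'
    obtain ⟨x, hx, hxj⟩ := chapman_exists hfin (m := m) (n := 1) h
    obtain ⟨x', hx', hxj'⟩ := chapman_exists hfin (m := m) (n := 1) h'
    rw [wc_one] at hxj hxj'
    exact ih (H j x x' hxj hxj' ▸ hx) hx'


/-- restriction of a weight function to a set -/
noncomputable def res (w : V → V → ℕ) (C : Set V) : V → V → ℕ :=
  fun a b => if a ∈ C ∧ b ∈ C then w a b else 0

omit hfin in
lemma res_le (C : Set V) (a b : V) : res w C a b ≤ w a b := by
  unfold res; split <;> simp

lemma res_fin (C : Set V) : ∀ u : V, {v | res w C u v ≠ 0}.Finite := by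
  intro u
  refine (hfin u).subset (fun x hx => ?_)
  simp only [Set.mem_setOf_eq] at hx ⊢
  intro h
  exact hx (by simp [res, h])

omit hfin in
lemma wi_zero (C : Set V) (i k : V) :
    walkCountIn w C 0 i k = if i = k ∧ i ∈ C then 1 else 0 := rfl

omit hfin in
lemma wi_succ (C : Set V) (n : ℕ) (i k : V) :
    walkCountIn w C (n + 1) i k
      = if i ∈ C then ∑ᶠ v, w i v * walkCountIn w C n v k else 0 := rfl

omit hfin in
lemma bridge (C : Set V) :
    ∀ (n : ℕ) (i k : V), walkCountIn w C n i k
      = if i ∈ C ∧ k ∈ C then walkCount (res w C) n i k else 0 := by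
  intro n
  induction n with
  | zero =>
    intro i k
    rw [wi_zero, wc_zero]
    by_cases h : i = k
    · subst h; by_cases hC : i ∈ C <;> simp [hC]
    · simp [h]
  | succ n ih =>
    intro i k
    rw [wi_succ, wc_succ]
    by_cases hi : i ∈ C
    · by_cases hk : k ∈ C
      · rw [if_pos hi, if_pos ⟨hi, hk⟩]
        refine finsum_congr (fun v => ?_)
        rw [ih v k]
        by_cases hv : v ∈ C
        · rw [if_pos ⟨hv, hk⟩]
          simp [res, hi, hv]
        · rw [if_neg (fun hc => hv hc.1)]
          simp [res, hv]
      · rw [if_pos hi, if_neg (fun hc => hk hc.2)]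
        refine finsum_eq_zero_of_forall_eq_zero (fun v => ?_)
        rw [ih v k, if_neg (fun hc => hk hc.2), mul_zero]
    · rw [if_neg hi, if_neg (fun hc => hi hc.1)]

omit hfin in
lemma wi_mem {C : Set V} {n : ℕ} {i k : V} (h : walkCountIn w C n i k ≠ 0) :
    i ∈ C ∧ k ∈ C := by
  rw [bridge] at h
  by_contra hc
  rw [if_neg hc] at h
  exact h rfl

omit hfin in
lemma wc_mono {w₂ : V → V → ℕ} (hle : ∀ a b, w a b ≤ w₂ a b)
    (hfin₂ : ∀ u : V, {v | w₂ u v ≠ 0}.Finite) :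
    ∀ (n : ℕ) (i k : V), walkCount w n i k ≤ walkCount w₂ n i k := by
  intro n
  induction n with
  | zero => intro i k; rw [wc_zero, wc_zero]
  | succ n ih =>
    intro i k
    rw [wc_succ, wc_succ]
    have h1 : ∑ᶠ v, w i v * walkCount w n v k
        = ∑ v ∈ (hfin₂ i).toFinset, w i v * walkCount w n v k := by
      refine finsum_eq_finset_sum_of_support_subset _ (fun x hx => ?_)
      simp only [Function.mem_support] at hx
      simp only [Set.Finite.coe_toFinset, Set.mem_setOf_eq]
      intro h2
      exact hx (by simp [Nat.le_zero.mp (h2 ▸ hle i x)])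
    have h2 : ∑ᶠ v, w₂ i v * walkCount w₂ n v k
        = ∑ v ∈ (hfin₂ i).toFinset, w₂ i v * walkCount w₂ n v k := by
      refine finsum_eq_finset_sum_of_support_subset _ (fun x hx => ?_)
      simp only [Function.mem_support] at hx
      simp only [Set.Finite.coe_toFinset, Set.mem_setOf_eq]
      intro h2
      exact hx (by simp [h2])
    rw [h1, h2]
    exact Finset.sum_le_sum (fun v _ => Nat.mul_le_mul (hle i v) (ih v k))

lemma wi_le (C : Set V) (n : ℕ) (i k : V) :
    walkCountIn w C n i k ≤ walkCount w n i k := by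
  rw [bridge]
  split
  · exact wc_mono (res_le C) hfin n i k -- base is res w C
  · exact Nat.zero_le _

lemma wi_term_le {C : Set V} {i : V} (hi : i ∈ C) (n : ℕ) (v k : V) :
    w i v * walkCountIn w C n v k ≤ walkCountIn w C (n + 1) i k := by
  rw [wi_succ, if_pos hi]
  refine single_le_finsum (f := fun v => w i v * walkCountIn w C n v k) v
    ?_ (fun x => Nat.zero_le _)
  refine (hfin i).subset (fun x hx => ?_)
  simp only [Function.mem_support] at hx
  simp only [Set.mem_setOf_eq]
  intro h
  exact hx (by simp [h])

/-- If every vertex visitable on a walk of length `n` from `i` to `k` lies in `C`,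
then restricted and unrestricted counts agree. -/
lemma wi_eq_wc {C : Set V} :
    ∀ {n : ℕ} {i k : V},
      (∀ t j, t ≤ n → walkCount w t i j ≠ 0 → walkCount w (n - t) j k ≠ 0 → j ∈ C) →
      walkCountIn w C n i k = walkCount w n i k := by
  intro n
  induction n with
  | zero =>
    intro i k hcov
    rw [wi_zero, wc_zero]
    by_cases h : i = k
    · subst h
      rw [if_pos ⟨rfl, hcov 0 i (le_refl 0) (by simp [wc_zero]) (by simp [wc_zero])⟩,
        if_pos rfl]
    · rw [if_neg (fun hc => h hc.1), if_neg h]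
  | succ n ih =>
    intro i k hcov
    rcases eq_or_ne (walkCount w (n + 1) i k) 0 with h0 | h0
    · rw [h0]
      exact Nat.le_zero.mp (h0 ▸ wi_le hfin C (n+1) i k)
    · have hi : i ∈ C :=
        hcov 0 i (Nat.zero_le _) (by simp [wc_zero]) (by simpa using h0)
      rw [wi_succ, if_pos hi, wc_succ]
      refine finsum_congr (fun v => ?_)
      rcases eq_or_ne (w i v) 0 with hw | hw
      · rw [hw, zero_mul, zero_mul]
      · rcases eq_or_ne (walkCount w n v k) 0 with hz | hz
        · have hz2 : walkCountIn w C n v k = 0 := Nat.le_zero.mp (hz ▸ wi_le hfin C n v k)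
          rw [hz, hz2]
        · congr 1
          refine ih (fun t j ht h1 h2 => ?_)
          refine hcov (t + 1) j (by omega) ?_ (by simpa using h2)
          have := mul_ne_zero hw h1
          have hle := term_le_succ hfin t i v j
          -- w i v * walkCount w t v j ≤ walkCount w (t+1) i j
          intro hc
          rw [hc] at hle
          omega


lemma split_first {S : Set V} :
    ∀ {m : ℕ} {i k : V}, i ∉ S → walkCount w m i k ≠ 0 →
      walkCountIn w Sᶜ m i k ≠ 0 ∨
        ∃ j s, s ∈ S ∧ (∃ t, walkCountIn w Sᶜ t i j ≠ 0) ∧ w j s ≠ 0 := by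
  intro m
  induction m with
  | zero =>
    intro i k hi h
    left
    rw [wc_zero] at h
    rcases eq_or_ne i k with rfl | hne
    · rw [wi_zero, if_pos ⟨rfl, hi⟩]; exact one_ne_zero
    · rw [if_neg hne] at h; exact absurd rfl h
  | succ m ih =>
    intro i k hi h
    obtain ⟨v, hv, hvk⟩ := wc_succ_exists h
    by_cases hvS : v ∈ S
    · right
      exact ⟨i, v, hvS, ⟨0, by rw [wi_zero, if_pos ⟨rfl, hi⟩]; exact one_ne_zero⟩, hv⟩
    · rcases ih hvS hvk with h1 | ⟨j, s, hs, ⟨t, ht⟩, hjs⟩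
      · left
        have := wi_term_le hfin (C := Sᶜ) hi m v k
        intro hc
        rw [hc] at this
        exact (mul_ne_zero hv h1) (Nat.le_zero.mp this)
      · right
        refine ⟨j, s, hs, ⟨t + 1, ?_⟩, hjs⟩
        have := wi_term_le hfin (C := Sᶜ) hi t v j
        intro hc
        rw [hc] at this
        exact (mul_ne_zero hv ht) (Nat.le_zero.mp this)

lemma split_last {S : Set V} :
    ∀ {m : ℕ} {i k : V}, k ∉ S → walkCount w m i k ≠ 0 →
      walkCountIn w Sᶜ m i k ≠ 0 ∨
        ∃ s v, s ∈ S ∧ w s v ≠ 0 ∧ ∃ q, walkCountIn w Sᶜ q v k ≠ 0 := by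
  intro m
  induction m with
  | zero =>
    intro i k hk h
    left
    rw [wc_zero] at h
    rcases eq_or_ne i k with rfl | hne
    · rw [wi_zero, if_pos ⟨rfl, hk⟩]; exact one_ne_zero
    · rw [if_neg hne] at h; exact absurd rfl h
  | succ m ih =>
    intro i k hk h
    obtain ⟨v, hv, hvk⟩ := wc_succ_exists h
    by_cases hiS : i ∈ S
    · rcases ih hk hvk with h1 | ⟨s, v', hs, hsv', hq⟩
      · exact Or.inr ⟨i, v, hiS, hv, m, h1⟩
      · exact Or.inr ⟨s, v', hs, hsv', hq⟩
    · rcases ih hk hvk with h1 | ⟨s, v', hs, hsv', hq⟩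
      · left
        have := wi_term_le hfin (C := Sᶜ) hiS m v k
        intro hc
        rw [hc] at this
        exact (mul_ne_zero hv h1) (Nat.le_zero.mp this)
      · exact Or.inr ⟨s, v', hs, hsv', hq⟩


omit hfin in
lemma wi_ne_iff {C : Set V} {n : ℕ} {i k : V} :
    walkCountIn w C n i k ≠ 0 ↔ i ∈ C ∧ k ∈ C ∧ walkCount (res w C) n i k ≠ 0 := by
  rw [bridge]
  by_cases h : i ∈ C ∧ k ∈ C
  · rw [if_pos h]; simp [h.1, h.2]
  · rw [if_neg h]; simp only [ne_eq, not_true_eq_false, false_iff]; tauto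

lemma wi_mul_ne {C : Set V} {a b : ℕ} {i j k : V}
    (h1 : walkCountIn w C a i j ≠ 0) (h2 : walkCountIn w C b j k ≠ 0) :
    walkCountIn w C (a + b) i k ≠ 0 := by
  rw [wi_ne_iff] at h1 h2 ⊢
  refine ⟨h1.1, h2.2.1, ?_⟩
  have := mul_le_chapman (res_fin hfin C) a b i j k
  have hne := mul_ne_zero h1.2.2 h2.2.2
  intro hc
  rw [hc] at this
  exact hne (Nat.le_zero.mp this)

/-- The set of vertices lying on a closed directed walk of positive length. -/
def C0 (w : V → V → ℕ) : Set V := {u | ∃ n, 1 ≤ n ∧ walkCount w n u u ≠ 0}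

lemma C0_finite {S : Set V} (hS : S.Finite)
    (hdeg : ∀ u ∉ S,
      (∃ v₀, w u v₀ ≤ 1 ∧ ∀ v, v ≠ v₀ → w u v = 0) ∧
      (∃ x₀, w x₀ u ≤ 1 ∧ ∀ x, x ≠ x₀ → w x u = 0))
    (hthrough : ∀ n, 1 ≤ n → ∀ i, walkCountIn w Sᶜ n i i = 0) :
    (C0 w).Finite := by
  classical
  set w' := res w Sᶜ with hw'
  have hfin' := res_fin hfin Sᶜ
  have hres : ∀ a b, w' a b ≠ 0 → a ∉ S ∧ b ∉ S ∧ w a b ≠ 0 := by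
    intro a b h
    rw [hw'] at h
    unfold res at h
    by_cases hc : a ∈ Sᶜ ∧ b ∈ Sᶜ
    · rw [if_pos hc] at h; exact ⟨hc.1, hc.2, h⟩
    · rw [if_neg hc] at h; exact absurd rfl h
  have Hfwd : ∀ a b b', w' a b ≠ 0 → w' a b' ≠ 0 → b = b' := by
    intro a b b' h h'
    obtain ⟨ha, -, hab⟩ := hres a b h
    obtain ⟨-, -, hab'⟩ := hres a b' h'
    obtain ⟨v₀, -, hv₀⟩ := (hdeg a ha).1
    have hb : b = v₀ := by by_contra hc; exact hab (hv₀ b hc)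
    have hb' : b' = v₀ := by by_contra hc; exact hab' (hv₀ b' hc)
    rw [hb, hb']
  -- every vertex of `C0` outside `S` has an "exit" to `S` through `Sᶜ`
  have hexit : ∀ u ∉ S, u ∈ C0 w →
      ∃ t j, walkCountIn w Sᶜ t u j ≠ 0 ∧ ∃ s ∈ S, w j s ≠ 0 := by
    intro u hu ⟨n, hn, hwc⟩
    rcases split_first hfin hu hwc with h1 | ⟨j, s, hs, ⟨t, ht⟩, hjs⟩
    · exact absurd (hthrough n hn u) h1
    · exact ⟨t, j, ht, s, hs, hjs⟩
  -- forward chains in `Sᶜ` are unique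
  have Huniq : ∀ {m : ℕ} {v u u' : V},
      walkCountIn w Sᶜ m v u ≠ 0 → walkCountIn w Sᶜ m v u' ≠ 0 → u = u' := by
    intro m v u u' h h'
    rw [wi_ne_iff] at h h'
    exact uniq_fwd Hfwd h.2.2 h'.2.2
  -- a chain cannot continue past an exit vertex
  have claimA : ∀ (a : ℕ) (v j' : V), walkCountIn w Sᶜ a v j' ≠ 0 →
      (∃ s' ∈ S, w j' s' ≠ 0) → ∀ (c : ℕ) (y : V), walkCountIn w Sᶜ c v y ≠ 0 → c ≤ a := by
    intro a v j' hj' ⟨s', hs', hjs'⟩ c y hy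
    by_contra hca
    push_neg at hca
    have hj'S : j' ∉ S := (wi_mem hj').2
    rw [wi_ne_iff] at hj' hy
    have hc : c = a + (c - a) := by omega
    rw [hc] at hy
    obtain ⟨x, hx1, hx2⟩ := chapman_exists hfin' hy.2.2
    have hxj : x = j' := uniq_fwd Hfwd hx1 hj'.2.2
    subst hxj
    have hd : c - a = (c - a - 1) + 1 := by omega
    rw [hd] at hx2
    obtain ⟨z, hz, -⟩ := wc_succ_exists hx2
    obtain ⟨-, hzS, hxz⟩ := hres x z hz
    obtain ⟨v₀, -, hv₀⟩ := (hdeg x hj'S).1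
    have h1 : z = v₀ := by by_contra hcz; exact hxz (hv₀ z hcz)
    have h2 : s' = v₀ := by by_contra hcz; exact hjs' (hv₀ s' hcz)
    exact hzS (h1.trans h2.symm ▸ hs')
  -- each forward chain contains finitely many `C0` vertices
  have hBv : ∀ v : V, ({u | u ∈ C0 w ∧ ∃ q, walkCountIn w Sᶜ q v u ≠ 0}).Finite := by
    intro v
    by_cases hne : ∃ u₀, u₀ ∈ C0 w ∧ ∃ q, walkCountIn w Sᶜ q v u₀ ≠ 0
    · obtain ⟨u₀, hu₀, q₀, hq₀⟩ := hne
      have hu₀S : u₀ ∉ S := (wi_mem hq₀).2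
      obtain ⟨t₀, j₀, ht₀, hexit₀⟩ := hexit u₀ hu₀S hu₀
      have hcomp : walkCountIn w Sᶜ (q₀ + t₀) v j₀ ≠ 0 := wi_mul_ne hfin hq₀ ht₀
      have hbound := claimA (q₀ + t₀) v j₀ hcomp hexit₀
      have hsub : ∀ q : ℕ, ({u | walkCountIn w Sᶜ q v u ≠ 0}).Finite := fun q =>
        Set.Subsingleton.finite (fun x hx y hy => Huniq hx hy)
      refine Set.Finite.subset
        ((Finset.range (q₀ + t₀ + 1)).finite_toSet.biUnion
          (fun q (_ : q ∈ ↑(Finset.range (q₀ + t₀ + 1))) => hsub q))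
          (fun u hu => ?_)
      obtain ⟨hu', q, hq⟩ := hu
      refine Set.mem_biUnion ?_ hq
      simp only [Finset.coe_range, Set.mem_Iio]
      exact Nat.lt_succ_of_le (hbound q u hq)
    · push_neg at hne
      refine Set.Finite.subset (Set.finite_empty) (fun u ⟨hu, q, hq⟩ => ?_)
      exact absurd hq (by simpa using hne u hu q)
  -- covering of `C0`
  refine Set.Finite.subset
    (hS.union (hS.biUnion (fun s _ => (hfin s).biUnion
      (fun v _ => hBv v)))) (fun u hu => ?_)
  by_cases huS : u ∈ S
  · exact Or.inl huS
  · obtain ⟨n, hn, hwc⟩ := hu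
    rcases split_last hfin huS hwc with h1 | ⟨s, v, hs, hsv, q, hq⟩
    · exact absurd (hthrough n hn u) h1
    · exact Or.inr (Set.mem_biUnion hs (Set.mem_biUnion hsv ⟨⟨n, hn, hwc⟩, q, hq⟩))


/-- mutual reachability class -/
def K (w : V → V → ℕ) (i : V) : Set V :=
  {j | (∃ n, walkCount w n i j ≠ 0) ∧ ∃ n, walkCount w n j i ≠ 0}

omit hfin in
lemma mem_K_self (i : V) : i ∈ K w i :=
  ⟨⟨0, by simp [wc_zero]⟩, ⟨0, by simp [wc_zero]⟩⟩

lemma wc_mul_ne {a b : ℕ} {i j k : V} (h1 : walkCount w a i j ≠ 0)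
    (h2 : walkCount w b j k ≠ 0) : walkCount w (a + b) i k ≠ 0 := by
  intro hc
  exact mul_ne_zero h1 h2 (Nat.le_zero.mp (hc ▸ mul_le_chapman hfin a b i j k))

lemma reach_trans {i j k : V} (h1 : ∃ n, walkCount w n i j ≠ 0)
    (h2 : ∃ n, walkCount w n j k ≠ 0) : ∃ n, walkCount w n i k ≠ 0 := by
  obtain ⟨a, ha⟩ := h1
  obtain ⟨b, hb⟩ := h2
  refine ⟨a + b, fun hc => mul_ne_zero ha hb (Nat.le_zero.mp ?_)⟩
  exact hc ▸ mul_le_chapman hfin a b i j k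

lemma K_subset_C0 {i : V} (hi : i ∈ C0 w) : K w i ⊆ C0 w := by
  rintro j ⟨hij, hji⟩
  obtain ⟨m, hm, hwc⟩ := hi
  obtain ⟨a, ha⟩ := hij
  obtain ⟨b, hb⟩ := hji
  exact ⟨b + (m + a), by omega, wc_mul_ne hfin hb (wc_mul_ne hfin hwc ha)⟩

lemma K_eq_of_mem {i j : V} (hj : j ∈ K w i) : K w j = K w i := by
  obtain ⟨hij, hji⟩ := hj
  ext x
  exact ⟨fun ⟨h1, h2⟩ => ⟨reach_trans hfin hij h1, reach_trans hfin h2 hji⟩,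
    fun ⟨h1, h2⟩ => ⟨reach_trans hfin hji h1, reach_trans hfin h2 hij⟩⟩

lemma wc_eq_wi_K (n : ℕ) (i : V) :
    walkCountIn w (K w i) n i i = walkCount w n i i :=
  wi_eq_wc hfin (fun t j _ h1 h2 => ⟨⟨t, h1⟩, ⟨n - t, h2⟩⟩)

lemma wi_K_pair {i j : V} (hij : j ∈ K w i) : ∃ n, walkCountIn w (K w i) n i j ≠ 0 := by
  obtain ⟨⟨a, ha⟩, ⟨b, hb⟩⟩ := hij
  refine ⟨a, ?_⟩
  rw [wi_eq_wc hfin (fun t x ht h1 h2 => ?_)]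
  · exact ha
  · refine ⟨⟨t, h1⟩, ?_⟩
    refine reach_trans hfin ⟨a - t, h2⟩ ⟨b, hb⟩


omit hfin in
open scoped ENNReal in
lemma grow_aux (k : ℕ) {M M'' : ℝ≥0∞} (hM0 : M ≠ 0) (hMM : M < M'') (_htop : M'' ≠ ⊤) :
    ∀ᶠ n : ℕ in Filter.atTop, (k : ℝ≥0∞) * M ^ n ≤ M'' ^ n := by
  have hMtop : M ≠ ⊤ := ne_top_of_lt hMM
  have hr : 1 < M'' / M := by
    rw [ENNReal.lt_div_iff_mul_lt (Or.inl hM0) (Or.inl hMtop), one_mul]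
    exact hMM
  have htt : Filter.Tendsto (fun n : ℕ => (M'' / M) ^ n) Filter.atTop (nhds ⊤) :=
    ENNReal.tendsto_pow_atTop_nhds_top_iff.mpr hr
  have hev : ∀ᶠ n : ℕ in Filter.atTop, (k : ℝ≥0∞) < (M'' / M) ^ n :=
    htt.eventually (lt_mem_nhds (ENNReal.natCast_lt_top k))
  filter_upwards [hev] with n hn
  calc (k : ℝ≥0∞) * M ^ n ≤ (M'' / M) ^ n * M ^ n := mul_le_mul_left hn.le _
  _ = ((M'' / M) * M) ^ n := (mul_pow _ _ _).symm
  _ = M'' ^ n := by rw [ENNReal.div_mul_cancel hM0 hMtop]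

end WalkAux

open scoped ENNReal

/-- For a directed multigraph with finite out-degrees admitting a finite subset `S` such that
every vertex outside `S` has out-degree and in-degree at most one, every closed directed walk
of positive length passes through `S`, and some closed directed walk of positive length exists:
the exponential growth rate of the number of based closed directed walks of length `n` is
achieved on some finite strongly connected subset `C` containing a closed directed walk of
positive length. -/
theorem cycle_growth_achieved_on_recurrent_component {V : Type*} (w : V → V → ℕ)
    (hfin : ∀ u : V, {v | w u v ≠ 0}.Finite)
    (S : Set V) (hS : S.Finite)
    (hdeg : ∀ u ∉ S,
      (∃ v₀, w u v₀ ≤ 1 ∧ ∀ v, v ≠ v₀ → w u v = 0) ∧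
      (∃ x₀, w x₀ u ≤ 1 ∧ ∀ x, x ≠ x₀ → w x u = 0))
    (hthrough : ∀ n, 1 ≤ n → ∀ i, walkCountIn w Sᶜ n i i = 0)
    (hexists : ∃ n, 1 ≤ n ∧ ∃ i, walkCount w n i i ≠ 0) :
    ∃ C : Set V, C.Finite ∧
      (∀ i ∈ C, ∀ j ∈ C, ∃ n : ℕ, walkCountIn w C n i j ≠ 0) ∧
      (∃ n, 1 ≤ n ∧ ∃ i, walkCountIn w C n i i ≠ 0) ∧
      Filter.limsup
          (fun n : ℕ => ((∑ᶠ i, walkCount w n i i : ℕ) : ℝ≥0∞) ^ (1 / (n : ℝ)))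
          Filter.atTop =
        Filter.limsup
          (fun n : ℕ => ((∑ᶠ i, walkCountIn w C n i i : ℕ) : ℝ≥0∞) ^ (1 / (n : ℝ)))
          Filter.atTop := by
  classical
  have hC0 : (WalkAux.C0 w).Finite := WalkAux.C0_finite hfin hS hdeg hthrough
  obtain ⟨n₀, hn₀, i₀, hi₀⟩ := hexists
  have hi₀C0 : i₀ ∈ WalkAux.C0 w := ⟨n₀, hn₀, hi₀⟩
  set F := hC0.toFinset with hF
  have hmemF : ∀ x, x ∈ F ↔ x ∈ WalkAux.C0 w := by
    intro x; rw [hF, Set.Finite.mem_toFinset]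
  set Ps := F.image (fun i => WalkAux.K w i) with hPs
  -- the key decomposition identity
  have key : ∀ n, 1 ≤ n → (∑ᶠ i, walkCount w n i i)
      = ∑ P ∈ Ps, ∑ᶠ i, walkCountIn w P n i i := by
    intro n hn
    have h1 : (∑ᶠ i, walkCount w n i i) = ∑ i ∈ F, walkCount w n i i := by
      refine finsum_eq_finset_sum_of_support_subset _ (fun x hx => ?_)
      simp only [Function.mem_support] at hx
      exact (hmemF x).mpr ⟨n, hn, hx⟩
    rw [h1]
    have h2 : ∀ i ∈ F, walkCount w n i i = ∑ P ∈ Ps, walkCountIn w P n i i := by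
      intro i hiF
      rw [Finset.sum_eq_single_of_mem (WalkAux.K w i)
        (Finset.mem_image_of_mem _ hiF) ?_]
      · exact (WalkAux.wc_eq_wi_K hfin n i).symm
      · intro P hPmem hPne
        by_contra hne0
        have hiP : i ∈ P := (WalkAux.wi_mem hne0).1
        obtain ⟨j, hjF, rfl⟩ := Finset.mem_image.mp hPmem
        exact hPne (WalkAux.K_eq_of_mem hfin hiP).symm
    rw [Finset.sum_congr rfl h2, Finset.sum_comm]
    refine Finset.sum_congr rfl (fun P hPmem => ?_)
    symm
    refine finsum_eq_finset_sum_of_support_subset _ (fun x hx => ?_)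
    simp only [Function.mem_support] at hx
    have hxP := (WalkAux.wi_mem hx).1
    obtain ⟨j, hjF, rfl⟩ := Finset.mem_image.mp hPmem
    exact (hmemF x).mpr (WalkAux.K_subset_C0 hfin ((hmemF j).mp hjF) hxP)
  -- choose the maximizing class
  have hPne : Ps.Nonempty :=
    ⟨WalkAux.K w i₀, Finset.mem_image_of_mem _ ((hmemF i₀).mpr hi₀C0)⟩
  obtain ⟨Pm, hPmMem, hmax⟩ := Ps.exists_max_image
    (fun P => Filter.limsup
      (fun n : ℕ => ((∑ᶠ i, walkCountIn w P n i i : ℕ) : ℝ≥0∞) ^ (1 / (n : ℝ)))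
      Filter.atTop) hPne
  obtain ⟨j₀, hj₀F, hPmK⟩ := Finset.mem_image.mp hPmMem
  have hj₀C0 : j₀ ∈ WalkAux.C0 w := (hmemF j₀).mp hj₀F
  refine ⟨Pm, ?_, ?_, ?_, ?_⟩
  · exact hC0.subset (hPmK ▸ WalkAux.K_subset_C0 hfin hj₀C0)
  · -- strong connectivity
    intro i hi j hj
    rw [← hPmK] at hi hj
    have hKi : WalkAux.K w i = WalkAux.K w j₀ := WalkAux.K_eq_of_mem hfin hi
    have hjKi : j ∈ WalkAux.K w i := hKi ▸ hj
    obtain ⟨n, hn⟩ := WalkAux.wi_K_pair hfin hjKi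
    exact ⟨n, by rwa [hKi, hPmK] at hn⟩
  · -- closed walk inside Pm
    obtain ⟨m, hm, hwc⟩ := hj₀C0
    refine ⟨m, hm, j₀, ?_⟩
    rw [← hPmK, WalkAux.wc_eq_wi_K hfin m j₀]
    exact hwc
  · -- limsup equality
    set u : ℕ → ℝ≥0∞ :=
      fun n => ((∑ᶠ i, walkCount w n i i : ℕ) : ℝ≥0∞) ^ (1 / (n : ℝ)) with hu
    set vv : Set V → ℕ → ℝ≥0∞ := fun P n =>
      ((∑ᶠ i, walkCountIn w P n i i : ℕ) : ℝ≥0∞) ^ (1 / (n : ℝ)) with hvv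
    have hle : ∀ᶠ n : ℕ in Filter.atTop, vv Pm n ≤ u n := by
      filter_upwards [Filter.eventually_ge_atTop 1] with n hn
      refine ENNReal.rpow_le_rpow (Nat.cast_le.mpr ?_) (by positivity)
      rw [key n hn]
      exact Finset.single_le_sum (f := fun P => ∑ᶠ i, walkCountIn w P n i i)
        (fun P _ => Nat.zero_le _) hPmMem
    have hge : Filter.limsup (vv Pm) Filter.atTop ≤ Filter.limsup u Filter.atTop :=
      Filter.limsup_le_limsup hle
    refine le_antisymm ?_ hge
    by_contra hlt
    push_neg at hlt
    obtain ⟨M, hM1, hM2⟩ := exists_between hlt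
    obtain ⟨M'', hM''1, hM''2⟩ := exists_between hM2
    have hM0 : M ≠ 0 := by rintro rfl; simpa using hM1
    have hM''top : M'' ≠ ⊤ := ne_top_of_lt hM''2
    have hall : ∀ᶠ n : ℕ in Filter.atTop, ∀ P ∈ Ps, vv P n < M :=
      Filter.eventually_all_finset Ps |>.mpr
        (fun P hP => Filter.eventually_lt_of_limsup_lt (lt_of_le_of_lt (hmax P hP) hM1))
    have hgrow := WalkAux.grow_aux Ps.card hM0 hM''1 hM''top
    have hbound : ∀ᶠ n : ℕ in Filter.atTop, u n ≤ M'' := by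
      filter_upwards [hall, hgrow, Filter.eventually_ge_atTop 1] with n hn hg h1
      have hnpos : (0 : ℝ) < (n : ℝ) := by exact_mod_cast h1
      rw [hu]
      simp only [one_div]
      rw [ENNReal.rpow_inv_le_iff hnpos, ENNReal.rpow_natCast]
      have htot : ((∑ᶠ i, walkCount w n i i : ℕ) : ℝ≥0∞)
          = ∑ P ∈ Ps, ((∑ᶠ i, walkCountIn w P n i i : ℕ) : ℝ≥0∞) := by
        rw [key n h1]; push_cast; rfl
      rw [htot]
      calc ∑ P ∈ Ps, ((∑ᶠ i, walkCountIn w P n i i : ℕ) : ℝ≥0∞)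
          ≤ ∑ _P ∈ Ps, M ^ n := by
            refine Finset.sum_le_sum (fun P hP => ?_)
            have := (hn P hP).le
            rw [hvv] at this
            rw [← ENNReal.rpow_natCast M n]
            exact (ENNReal.rpow_inv_le_iff hnpos).mp (by simpa only [one_div] using this)
        _ = (Ps.card : ℝ≥0∞) * M ^ n := by
            rw [Finset.sum_const, nsmul_eq_mul]
        _ ≤ M'' ^ n := hg
    have : Filter.limsup u Filter.atTop ≤ M'' :=
      Filter.limsup_le_of_le (by isBoundedDefault) hbound
    exact absurd (lt_of_lt_of_le hM''2 this) (lt_irrefl _)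
end
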